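/- arXiv:2507.07040 — 4 statements merged into one kernel-verified Lean document; each statement's English description precedes it below -/
import Mathlib

section
/- If f and g are radially symmetric functions on ℝ^d with f ⊴ g (i.e. ∫_{B_r} f ≤ ∫_{B_r} g for all r ≥ 0, with equality at some R covering the supports), f radially non-increasing and non-negative, and Φ : ℝ → ℝ is convex non-decreasing and differentiable, then ∫_{B_R} Φ(f) ≤ ∫_{B_R} Φ(g), provided Φ'(f) is radially non-increasing and the integrals over B_R of f and g coincide. -/
open MeasureTheory Real Metric Set

noncomputable section

/-- Euclidean space ℝ^d. -/
abbrev Euc (d : ℕ) := EuclideanSpace ℝ (Fin d)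

/-- Superlevel sets of radially antitone functions are `∅`, `univ`, balls or closed balls. -/
lemma superlevel_classify {d : ℕ} (h : Euc d → ℝ)
    (hanti : ∀ x y : Euc d, ‖x‖ ≤ ‖y‖ → h y ≤ h x) (t : ℝ) :
    {x : Euc d | t < h x} = ∅ ∨ {x : Euc d | t < h x} = univ ∨
      ∃ ρ : ℝ, 0 ≤ ρ ∧ ({x : Euc d | t < h x} = ball 0 ρ ∨
        {x : Euc d | t < h x} = closedBall 0 ρ) := by
  set D := {x : Euc d | t < h x} with hDdef
  rcases eq_empty_or_nonempty D with he | ⟨x₀, hx₀⟩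
  · exact Or.inl he
  right
  by_cases hb : BddAbove ((fun x : Euc d => ‖x‖) '' D)
  · right
    have hne : ((fun x : Euc d => ‖x‖) '' D).Nonempty := ⟨‖x₀‖, ⟨x₀, hx₀, rfl⟩⟩
    set ρ := sSup ((fun x : Euc d => ‖x‖) '' D) with hρdef
    have hρ0 : 0 ≤ ρ := le_trans (norm_nonneg x₀) (le_csSup hb ⟨x₀, hx₀, rfl⟩)
    have hsub1 : ball (0 : Euc d) ρ ⊆ D := by
      intro y hy
      rw [mem_ball_zero_iff] at hy
      obtain ⟨a, ⟨x, hxD, rfl⟩, hax⟩ := exists_lt_of_lt_csSup hne hy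
      exact mem_setOf.mpr (lt_of_lt_of_le hxD (hanti y x hax.le))
    have hsub2 : D ⊆ closedBall (0 : Euc d) ρ := by
      intro x hx
      rw [mem_closedBall_zero_iff]
      exact le_csSup hb ⟨x, hx, rfl⟩
    by_cases hs : sphere (0 : Euc d) ρ ⊆ D
    · refine ⟨ρ, hρ0, Or.inr (subset_antisymm hsub2 ?_)⟩
      intro x hx
      rcases lt_or_eq_of_le (mem_closedBall_zero_iff.1 hx) with hlt | heq2
      · exact hsub1 (mem_ball_zero_iff.2 hlt)
      · exact hs (mem_sphere_zero_iff_norm.2 heq2)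
    · refine ⟨ρ, hρ0, Or.inl (subset_antisymm ?_ hsub1)⟩
      intro x hx
      rcases lt_or_eq_of_le (mem_closedBall_zero_iff.1 (hsub2 hx)) with hlt | heq2
      · exact mem_ball_zero_iff.2 hlt
      · exfalso
        apply hs
        intro z hz
        have hz' : ‖z‖ = ρ := mem_sphere_zero_iff_norm.1 hz
        have h1 : h x ≤ h z := hanti z x (by rw [hz', heq2])
        exact mem_setOf.mpr (lt_of_lt_of_le hx h1)
  · left
    apply eq_univ_iff_forall.2
    intro y
    obtain ⟨a, ha, hya⟩ := (not_bddAbove_iff.1 hb) ‖y‖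
    obtain ⟨x, hxD, rfl⟩ := ha
    exact mem_setOf.mpr (lt_of_lt_of_le hxD (hanti y x hya.le))

/-- Counting lemma: the number of `k ∈ [1, N]` with `k/n < c` is close to `n·c`. -/
lemma count_bound (n N : ℕ) (hn : 0 < n) (c : ℝ) (hc0 : 0 ≤ c) (hcN : (n : ℝ) * c ≤ N) :
    c - 1/(n:ℝ) ≤ (((Finset.Icc 1 N).filter (fun k : ℕ => ((k:ℝ)/(n:ℝ) < c))).card : ℝ) / n ∧
    (((Finset.Icc 1 N).filter (fun k : ℕ => ((k:ℝ)/(n:ℝ) < c))).card : ℝ) / n ≤ c := by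
  have hn' : (0:ℝ) < n := Nat.cast_pos.mpr hn
  have hm : ⌈(n:ℝ)*c⌉₊ ≤ N := Nat.ceil_le.mpr hcN
  have hfe : (Finset.Icc 1 N).filter (fun k : ℕ => ((k:ℝ)/(n:ℝ) < c))
      = Finset.Icc 1 (⌈(n:ℝ)*c⌉₊ - 1) := by
    ext k
    simp only [Finset.mem_filter, Finset.mem_Icc]
    constructor
    · rintro ⟨⟨h1, h2⟩, h3⟩
      have h4 : (k:ℝ) < c * (n:ℝ) := by rwa [div_lt_iff₀ hn'] at h3
      have hk : k < ⌈(n:ℝ)*c⌉₊ := Nat.lt_ceil.mpr (by rw [mul_comm]; exact h4)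
      exact ⟨h1, by omega⟩
    · rintro ⟨h1, h2⟩
      have hk : k < ⌈(n:ℝ)*c⌉₊ := by omega
      have h4 : (k:ℝ) < (n:ℝ) * c := Nat.lt_ceil.mp hk
      refine ⟨⟨h1, by omega⟩, ?_⟩
      rw [div_lt_iff₀ hn', mul_comm]
      exact h4
  rw [hfe, Nat.card_Icc]
  have hcc : ⌈(n:ℝ)*c⌉₊ - 1 + 1 - 1 = ⌈(n:ℝ)*c⌉₊ - 1 := by omega
  rw [hcc]
  rcases Nat.eq_zero_or_pos ⌈(n:ℝ)*c⌉₊ with hm0 | hm1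
  · have h5 : (n:ℝ) * c ≤ 0 := by
      have := Nat.le_ceil ((n:ℝ)*c)
      rw [hm0] at this
      simpa using this
    have h6 : (n:ℝ) * c = 0 := le_antisymm h5 (by positivity)
    have hc00 : c = 0 := by
      rcases mul_eq_zero.1 h6 with h | h
      · exact absurd h (by positivity)
      · exact h
    rw [hm0, hc00]
    norm_num
  · have hcast : ((⌈(n:ℝ)*c⌉₊ - 1 : ℕ) : ℝ) = (⌈(n:ℝ)*c⌉₊ : ℝ) - 1 := by
      rw [Nat.cast_sub hm1]; norm_num
    rw [hcast]
    have hle : (n:ℝ) * c ≤ ⌈(n:ℝ)*c⌉₊ := Nat.le_ceil _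
    have hlt : (⌈(n:ℝ)*c⌉₊ : ℝ) < (n:ℝ) * c + 1 := Nat.ceil_lt_add_one (by positivity)
    constructor
    · rw [sub_le_iff_le_add, ← add_div, le_div_iff₀ hn']
      linarith
    · rw [div_le_iff₀ hn']
      linarith

/-- Comparison of the integrals of `Φ(f)` and `Φ(g)` for radially symmetric functions
with `f` less concentrated than `g`, `f` radially non-increasing and non-negative,
`Φ` convex non-decreasing differentiable with `Φ'(f)` radially non-increasing, equal
masses over `B_R`, and the supports contained in `B_R`. -/
theorem concentration_comparison (d : ℕ) (f g : Euc d → ℝ) (R : ℝ) (hR : 0 < R)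
    (hfrad : ∀ x y : Euc d, ‖x‖ = ‖y‖ → f x = f y)
    (hgrad : ∀ x y : Euc d, ‖x‖ = ‖y‖ → g x = g y)
    (hconc : ∀ r : ℝ, 0 ≤ r → (∫ x in ball (0 : Euc d) r, f x) ≤ ∫ x in ball (0 : Euc d) r, g x)
    (heq : (∫ x in ball (0 : Euc d) R, f x) = ∫ x in ball (0 : Euc d) R, g x)
    (hsupf : Function.support f ⊆ closedBall (0 : Euc d) R)
    (hsupg : Function.support g ⊆ closedBall (0 : Euc d) R)
    (hfmono : ∀ x y : Euc d, ‖x‖ ≤ ‖y‖ → f y ≤ f x)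
    (hfpos : ∀ x, 0 ≤ f x)
    (Φ : ℝ → ℝ) (hconv : ConvexOn ℝ Set.univ Φ) (hΦmono : Monotone Φ)
    (hΦdiff : Differentiable ℝ Φ)
    (hΦ'mono : ∀ x y : Euc d, ‖x‖ ≤ ‖y‖ → deriv Φ (f y) ≤ deriv Φ (f x))
    (hif : IntegrableOn f (closedBall (0 : Euc d) R))
    (hig : IntegrableOn g (closedBall (0 : Euc d) R))
    (hiΦf : IntegrableOn (fun x => Φ (f x)) (closedBall (0 : Euc d) R))
    (hiΦg : IntegrableOn (fun x => Φ (g x)) (closedBall (0 : Euc d) R)) :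
    (∫ x in ball (0 : Euc d) R, Φ (f x)) ≤ ∫ x in ball (0 : Euc d) R, Φ (g x) := by
  rcases Nat.eq_zero_or_pos d with rfl | hd
  · -- dimension 0 : the space is a single point
    haveI : Subsingleton (Euc 0) := ⟨fun a b => by ext i; exact i.elim0⟩
    have hfc : ∀ x : Euc 0, f x = f 0 := fun x => by rw [Subsingleton.elim x 0]
    have hgc : ∀ x : Euc 0, g x = g 0 := fun x => by rw [Subsingleton.elim x 0]
    set V := (volume (ball (0 : Euc 0) R)).toReal with hV
    have h1 : (∫ x in ball (0 : Euc 0) R, f x) = V * f 0 := by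
      rw [show (∫ x in ball (0 : Euc 0) R, f x) = ∫ _x in ball (0 : Euc 0) R, f 0 from
        integral_congr_ae (Filter.Eventually.of_forall fun x => hfc x)]
      rw [setIntegral_const, smul_eq_mul]; rfl
    have h2 : (∫ x in ball (0 : Euc 0) R, g x) = V * g 0 := by
      rw [show (∫ x in ball (0 : Euc 0) R, g x) = ∫ _x in ball (0 : Euc 0) R, g 0 from
        integral_congr_ae (Filter.Eventually.of_forall fun x => hgc x)]
      rw [setIntegral_const, smul_eq_mul]; rfl
    have h3 : (∫ x in ball (0 : Euc 0) R, Φ (f x)) = V * Φ (f 0) := by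
      rw [show (∫ x in ball (0 : Euc 0) R, Φ (f x)) = ∫ _x in ball (0 : Euc 0) R, Φ (f 0) from
        integral_congr_ae (Filter.Eventually.of_forall fun x => by show Φ (f x) = Φ (f 0); rw [hfc x])]
      rw [setIntegral_const, smul_eq_mul]; rfl
    have h4 : (∫ x in ball (0 : Euc 0) R, Φ (g x)) = V * Φ (g 0) := by
      rw [show (∫ x in ball (0 : Euc 0) R, Φ (g x)) = ∫ _x in ball (0 : Euc 0) R, Φ (g 0) from
        integral_congr_ae (Filter.Eventually.of_forall fun x => by show Φ (g x) = Φ (g 0); rw [hgc x])]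
      rw [setIntegral_const, smul_eq_mul]; rfl
    rw [h1, h2] at heq
    rw [h3, h4]
    rcases eq_or_ne V 0 with hV0 | hV0
    · rw [hV0]; simp
    · have : f 0 = g 0 := mul_left_cancel₀ hV0 heq
      rw [this]
  · -- dimension ≥ 1
    haveI : Nonempty (Fin d) := ⟨⟨0, hd⟩⟩
    haveI : Nontrivial (Euc d) := by
      refine ⟨EuclideanSpace.single ⟨0, hd⟩ (1:ℝ), 0, fun hcon => ?_⟩
      have h1 : (1:ℝ) = 0 := by simpa using congrArg (fun v : Euc d => v ⟨0, hd⟩) hcon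
      exact one_ne_zero h1
    -- global integrability
    have hfInt : Integrable f := by
      rw [← Set.indicator_eq_self.2 hsupf]
      exact (integrable_indicator_iff measurableSet_closedBall).mpr hif
    have hgInt : Integrable g := by
      rw [← Set.indicator_eq_self.2 hsupg]
      exact (integrable_indicator_iff measurableSet_closedBall).mpr hig
    set h : Euc d → ℝ := fun x => deriv Φ (f x) with hhdef
    have hanti : ∀ x y : Euc d, ‖x‖ ≤ ‖y‖ → h y ≤ h x := hΦ'mono
    have hmeasD : ∀ t : ℝ, MeasurableSet {x : Euc d | t < h x} := by
      intro t
      rcases superlevel_classify h hanti t with h1 | h1 | ⟨ρ, _, h1 | h1⟩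
      · rw [h1]; exact MeasurableSet.empty
      · rw [h1]; exact MeasurableSet.univ
      · rw [h1]; exact measurableSet_ball
      · rw [h1]; exact measurableSet_closedBall
    have hhm : Measurable h := measurable_of_Ioi hmeasD
    have hderiv_nonneg : ∀ a : ℝ, 0 ≤ deriv Φ a := by
      intro a
      have h2 : slope Φ (a-1) a ≤ deriv Φ a :=
        hconv.slope_le_deriv (mem_univ _) (mem_univ _) (by linarith) (hΦdiff a)
      have h3 : 0 ≤ slope Φ (a-1) a := by
        rw [slope_def_field]
        apply div_nonneg (sub_nonneg.2 (hΦmono (by linarith))) (by linarith)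
      linarith
    have tangent : ∀ a b : ℝ, deriv Φ a * (b - a) ≤ Φ b - Φ a := by
      intro a b
      rcases lt_trichotomy a b with hab | rfl | hab
      · have h1 := hconv.deriv_le_slope (mem_univ a) (mem_univ b) hab (hΦdiff a)
        rw [slope_def_field] at h1
        exact (le_div_iff₀ (by linarith)).1 h1
      · simp
      · have h1 := hconv.slope_le_deriv (mem_univ b) (mem_univ a) hab (hΦdiff a)
        rw [slope_def_field] at h1
        have h2 := (div_le_iff₀ (by linarith : (0:ℝ) < a - b)).1 h1
        have h3 : deriv Φ a * (b - a) = -(deriv Φ a * (a - b)) := by ring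
        rw [h3]; linarith
    set M := deriv Φ (f 0) with hMdef
    have hM : ∀ x : Euc d, h x ≤ M := fun x => hΦ'mono 0 x (by simpa using norm_nonneg x)
    have h0 : ∀ x : Euc d, 0 ≤ h x := fun x => hderiv_nonneg (f x)
    have hMnn : 0 ≤ M := hderiv_nonneg _
    have hGnonneg : ∀ r : ℝ, 0 ≤ r → 0 ≤ ∫ x in ball (0:Euc d) r, (g x - f x) := by
      intro r hr
      rw [integral_sub hgInt.integrableOn hfInt.integrableOn]
      exact sub_nonneg.2 (hconc r hr)
    have hsphere : ∀ ρ : ℝ, volume (sphere (0:Euc d) ρ) = 0 := fun ρ =>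
      Measure.addHaar_sphere volume 0 ρ
    have hcb_ae : ∀ ρ : ℝ, (closedBall (0:Euc d) ρ : Set (Euc d)) =ᵐ[volume] ball 0 ρ := by
      intro ρ
      refine MeasureTheory.ae_eq_set.mpr ⟨?_, ?_⟩
      · refine measure_mono_null (fun x hx => ?_) (hsphere ρ)
        rcases hx with ⟨hx1, hx2⟩
        rw [mem_closedBall_zero_iff] at hx1
        rw [mem_ball_zero_iff] at hx2
        exact mem_sphere_zero_iff_norm.2 (le_antisymm hx1 (not_lt.1 hx2))
      · rw [Set.diff_eq_empty.2 ball_subset_closedBall]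
        exact measure_empty
    have key : ∀ t : ℝ, 0 ≤ ∫ x in ball (0:Euc d) R,
        ({x : Euc d | t < h x}).indicator (fun y => g y - f y) x := by
      intro t
      rw [setIntegral_indicator (hmeasD t)]
      rcases superlevel_classify h hanti t with h1 | h1 | ⟨ρ, hρ, h1 | h1⟩
      · rw [h1, inter_empty, setIntegral_empty]
      · rw [h1, inter_univ]; exact hGnonneg R hR.le
      · rw [h1]
        have h2 : ball (0:Euc d) R ∩ ball 0 ρ = ball 0 (min R ρ) := by
          ext x
          simp only [mem_inter_iff, mem_ball_zero_iff, lt_min_iff]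
        rw [h2]
        exact hGnonneg _ (le_min hR.le hρ)
      · rw [h1]
        rcases le_or_gt R ρ with hRρ | hRρ
        · have h2 : ball (0:Euc d) R ∩ closedBall 0 ρ = ball 0 R :=
            inter_eq_left.2 (ball_subset_closedBall.trans (closedBall_subset_closedBall hRρ))
          rw [h2]; exact hGnonneg R hR.le
        · have h2 : ball (0:Euc d) R ∩ closedBall 0 ρ = closedBall 0 ρ :=
            inter_eq_right.2 (closedBall_subset_ball hRρ)
          rw [h2, setIntegral_congr_set (hcb_ae ρ)]
          exact hGnonneg ρ hρ
    -- integrability on the ball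
    have hφ : IntegrableOn (fun x => g x - f x) (ball (0:Euc d) R) :=
      hgInt.integrableOn.sub hfInt.integrableOn
    have habs : Integrable (fun x => |g x - f x|) (volume.restrict (ball (0:Euc d) R)) := hφ.abs
    set C := ∫ x in ball (0:Euc d) R, |g x - f x| with hCdef
    have hC0 : 0 ≤ C := integral_nonneg fun x => abs_nonneg _
    have hhφ : Integrable (fun x => h x * (g x - f x))
        (volume.restrict (ball (0:Euc d) R)) :=
      hφ.bdd_mul hhm.aestronglyMeasurable.restrict
        (c := M) (Filter.Eventually.of_forall fun x => by rw [Real.norm_eq_abs, abs_of_nonneg (h0 x)]; exact hM x)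
    set J := ∫ x in ball (0:Euc d) R, h x * (g x - f x) with hJdef
    have main : ∀ n : ℕ, 0 < n → -((1/(n:ℝ)) * C) ≤ J := by
      intro n hn
      have hn' : (0:ℝ) < n := Nat.cast_pos.2 hn
      set N := ⌈(n:ℝ) * M⌉₊ with hNdef
      set S : Euc d → ℝ := fun x => ∑ k ∈ Finset.Icc 1 N,
        ({y : Euc d | (k:ℝ)/(n:ℝ) < h y}).indicator (fun y => g y - f y) x with hSdef
      have hSterm : ∀ k ∈ Finset.Icc 1 N, Integrable
          (fun x => ({y : Euc d | (k:ℝ)/(n:ℝ) < h y}).indicator (fun y => g y - f y) x)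
          (volume.restrict (ball (0:Euc d) R)) := by
        intro k _
        exact hφ.indicator (hmeasD _)
      have hSint : Integrable S (volume.restrict (ball (0:Euc d) R)) :=
        integrable_finset_sum _ hSterm
      have hSnn : 0 ≤ ∫ x in ball (0:Euc d) R, S x := by
        rw [integral_finset_sum _ hSterm]
        exact Finset.sum_nonneg fun k _ => key _
      have hpt : ∀ x : Euc d,
          |h x * (g x - f x) - (1/(n:ℝ)) * S x| ≤ (1/(n:ℝ)) * |g x - f x| := by
        intro x
        have hcard := count_bound n N hn (h x) (h0 x)
          (le_trans (mul_le_mul_of_nonneg_left (hM x) hn'.le) (Nat.le_ceil _))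
        set c : ℝ := (((Finset.Icc 1 N).filter (fun k : ℕ => ((k:ℝ)/(n:ℝ) < h x))).card : ℝ) with hcdef
        have hSx : S x = c * (g x - f x) := by
          show (∑ k ∈ Finset.Icc 1 N,
            ({y : Euc d | (k:ℝ)/(n:ℝ) < h y}).indicator (fun y => g y - f y) x) = c * (g x - f x)
          have hterm : ∀ k : ℕ, ({y : Euc d | (k:ℝ)/(n:ℝ) < h y}).indicator
              (fun y => g y - f y) x
              = (if (k:ℝ)/(n:ℝ) < h x then (1:ℝ) else 0) * (g x - f x) := by
            intro k
            by_cases hk : (k:ℝ)/(n:ℝ) < h x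
            · rw [Set.indicator_of_mem (show x ∈ {y : Euc d | (k:ℝ)/(n:ℝ) < h y} from hk), if_pos hk, one_mul]
            · rw [Set.indicator_of_notMem (show x ∉ {y : Euc d | (k:ℝ)/(n:ℝ) < h y} from hk), if_neg hk, zero_mul]
          rw [Finset.sum_congr rfl (fun k _ => hterm k), ← Finset.sum_mul, Finset.sum_boole]
        have habs1 : |h x - c / n| ≤ 1/(n:ℝ) := by
          rw [abs_le]
          constructor
          · linarith [hcard.2]
          · linarith [hcard.1]
        have hfac : h x * (g x - f x) - (1/(n:ℝ)) * S x = (h x - c/n) * (g x - f x) := by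
          rw [hSx]; field_simp
        rw [hfac, abs_mul]
        exact mul_le_mul_of_nonneg_right habs1 (abs_nonneg _)
      have hlow : Integrable (fun x => -((1/(n:ℝ)) * |g x - f x|))
          (volume.restrict (ball (0:Euc d) R)) := (habs.const_mul _).neg
      have hmain1 : (∫ x in ball (0:Euc d) R, -((1/(n:ℝ)) * |g x - f x|))
          ≤ ∫ x in ball (0:Euc d) R, (h x * (g x - f x) - (1/(n:ℝ)) * S x) := by
        apply integral_mono hlow (hhφ.sub (hSint.const_mul _))
        intro x
        have h1 := hpt x
        have h2 := neg_abs_le (h x * (g x - f x) - (1/(n:ℝ)) * S x)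
        simp only [Pi.sub_apply]
        linarith
      rw [integral_sub hhφ (hSint.const_mul _), integral_neg, integral_const_mul,
        integral_const_mul] at hmain1
      have hJ : J = ∫ x in ball (0:Euc d) R, h x * (g x - f x) := hJdef
      have h1n : 0 ≤ (1/(n:ℝ)) := by positivity
      have h3 : 0 ≤ (1/(n:ℝ)) * ∫ x in ball (0:Euc d) R, S x := mul_nonneg h1n hSnn
      rw [← hCdef] at hmain1
      rw [hJ]
      linarith
    -- conclude 0 ≤ J
    have hJnn : 0 ≤ J := by
      by_contra hcon
      push_neg at hcon
      obtain ⟨n, hn⟩ := exists_nat_gt (C / (-J))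
      have hdivnn : (0:ℝ) ≤ C / (-J) := div_nonneg hC0 (by linarith)
      have hn0 : 0 < n := by exact_mod_cast lt_of_le_of_lt hdivnn hn
      have hn' : (0:ℝ) < n := Nat.cast_pos.2 hn0
      have hb := main n hn0
      rw [div_lt_iff₀ (by linarith : (0:ℝ) < -J)] at hn
      have h2 : -C ≤ (n:ℝ) * J := by
        have h3 := mul_le_mul_of_nonneg_left hb hn'.le
        have e : (n:ℝ) * (-((1/(n:ℝ))*C)) = -C := by field_simp
        rw [e] at h3
        exact h3
      have h4 : (n:ℝ) * (-J) = -((n:ℝ) * J) := by ring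
      rw [h4] at hn
      linarith
    -- final combination
    have hiΦfb : IntegrableOn (fun x => Φ (f x)) (ball (0:Euc d) R) :=
      hiΦf.mono_set ball_subset_closedBall
    have hiΦgb : IntegrableOn (fun x => Φ (g x)) (ball (0:Euc d) R) :=
      hiΦg.mono_set ball_subset_closedBall
    have hnn : 0 ≤ ∫ x in ball (0:Euc d) R,
        (Φ (g x) - Φ (f x) - h x * (g x - f x)) := by
      apply integral_nonneg
      intro x
      have := tangent (f x) (g x)
      simp only [Pi.zero_apply]
      linarith
    have hsubint : Integrable (fun x => Φ (g x) - Φ (f x))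
        (volume.restrict (ball (0:Euc d) R)) := hiΦgb.sub hiΦfb
    rw [integral_sub hsubint hhφ, integral_sub hiΦgb hiΦfb] at hnn
    rw [← hJdef] at hnn
    linarith
end
end

section
/- Let B ⊆ ℝ^d (d ≥ 2) be the ball of radius R centered at the origin and τ > 0. Then the radial function w(r) = (R² - r²)/(2dτ) + (R/(dτ^{3/2}))[ (I_ν(√τ r)/I_{ν+1}(√τ R)) (r/R)^{-ν} − I_ν(√τ R)/I_{ν+1}(√τ R) ], with ν = d/2 − 1 and I_μ the modified Bessel function of the first kind, satisfies Δ²w − τΔw = 1 in B, w = 0 on ∂B, and ∂_n w = 0 on ∂B. -/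
open MeasureTheory Real Metric Set

noncomputable section

/-- The modified Bessel function of the first kind `I_μ`, defined by its power series
`I_μ(x) = Σ_{k≥0} (x/2)^{2k+μ} / (k! Γ(k+μ+1))`. -/
def besselI (μ : ℝ) (x : ℝ) : ℝ :=
  ∑' k : ℕ, (x / 2) ^ (2 * (k : ℝ) + μ) / ((Nat.factorial k : ℝ) * Real.Gamma (k + μ + 1))

/-- The radial Laplacian in dimension `d`: `Δw(r) = w''(r) + ((d-1)/r) w'(r)`. -/
def radLap (d : ℕ) (w : ℝ → ℝ) (r : ℝ) : ℝ :=
  deriv (deriv w) r + ((d : ℝ) - 1) / r * deriv w r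
/-- The torsion function of the clamped ball of radius `R` under tension `τ > 0`:
`w(r) = (R²-r²)/(2dτ) + (R/(dτ^{3/2}))[(I_ν(√τ r)/I_{ν+1}(√τ R))(r/R)^{-ν} - I_ν(√τ R)/I_{ν+1}(√τ R)]`
with `ν = d/2 - 1`. -/
def torsionW (d : ℕ) (R τ r : ℝ) : ℝ :=
  (R ^ 2 - r ^ 2) / (2 * d * τ) +
    R / (d * τ ^ ((3 : ℝ) / 2)) *
      ((besselI ((d : ℝ) / 2 - 1) (Real.sqrt τ * r) /
            besselI ((d : ℝ) / 2 - 1 + 1) (Real.sqrt τ * R)) * (r / R) ^ (-((d : ℝ) / 2 - 1)) -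
        besselI ((d : ℝ) / 2 - 1) (Real.sqrt τ * R) /
          besselI ((d : ℝ) / 2 - 1 + 1) (Real.sqrt τ * R))

namespace T

def A (μ c : ℝ) (k : ℕ) : ℝ := c ^ k / (k.factorial * Real.Gamma ((k : ℝ) + μ + 1))

lemma A_pos {μ c : ℝ} (hμ : 0 ≤ μ) (hc : 0 < c) (k : ℕ) : 0 < A μ c k := by
  have h1 : (0:ℝ) < (k:ℝ) + μ + 1 := by positivity
  have hΓ := Real.Gamma_pos_of_pos h1
  have hfac : (0:ℝ) < (k.factorial : ℝ) := by exact_mod_cast k.factorial_pos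
  exact div_pos (pow_pos hc k) (mul_pos hfac hΓ)

lemma A_succ {μ : ℝ} (c : ℝ) (hμ : 0 ≤ μ) (k : ℕ) :
    A μ c (k+1) * (((k:ℝ)+1) * (((k:ℝ)+1)+μ)) = c * A μ c k := by
  have h1 : ((k:ℝ) + μ + 1) ≠ 0 := by positivity
  have hΓpos := Real.Gamma_pos_of_pos (show (0:ℝ) < (k:ℝ)+μ+1 by positivity)
  have hΓ : Real.Gamma (((k:ℕ)+1:ℕ) + μ + 1) = ((k:ℝ)+μ+1) * Real.Gamma ((k:ℝ)+μ+1) := by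
    push_cast
    rw [show ((k:ℝ)+1+μ+1) = ((k:ℝ)+μ+1)+1 by ring, Real.Gamma_add_one h1]
  have hfac : ((k.factorial : ℝ)) ≠ 0 := by exact_mod_cast k.factorial_pos.ne'
  unfold A
  rw [hΓ]
  push_cast [Nat.factorial_succ]
  field_simp
  ring

lemma A_shift {μ : ℝ} (c : ℝ) (hμ : 0 ≤ μ) (k : ℕ) :
    A μ c (k+1) * (2*((k:ℝ)+1)) = 2 * c * A (μ+1) c k := by
  have hΓpos := Real.Gamma_pos_of_pos (show (0:ℝ) < (k:ℝ)+(μ+1)+1 by positivity)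
  have hfac : ((k.factorial : ℝ)) ≠ 0 := by exact_mod_cast k.factorial_pos.ne'
  unfold A
  have harg : (((k:ℕ)+1:ℕ) : ℝ) + μ + 1 = (k:ℝ)+(μ+1)+1 := by push_cast; ring
  rw [harg]
  push_cast [Nat.factorial_succ]
  field_simp
  ring

lemma fact_Gamma_le {μ : ℝ} (hμ : 0 ≤ μ) (k : ℕ) :
    (k.factorial : ℝ) * Real.Gamma (μ+1) ≤ Real.Gamma ((k:ℝ) + μ + 1) := by
  induction k with
  | zero => simp
  | succ k ih =>
    have h1 : ((k:ℝ) + μ + 1) ≠ 0 := by positivity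
    have hΓ : Real.Gamma (((k+1:ℕ):ℝ) + μ + 1) = ((k:ℝ)+μ+1) * Real.Gamma ((k:ℝ)+μ+1) := by
      push_cast
      rw [show ((k:ℝ)+1+μ+1) = ((k:ℝ)+μ+1)+1 by ring, Real.Gamma_add_one h1]
    have hΓpos := Real.Gamma_pos_of_pos (show (0:ℝ) < (k:ℝ)+μ+1 by positivity)
    have hΓ1pos := Real.Gamma_pos_of_pos (show (0:ℝ) < μ+1 by positivity)
    have hfac : (0:ℝ) < (k.factorial : ℝ) := by exact_mod_cast k.factorial_pos
    rw [hΓ]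
    have h2 : ((k+1).factorial : ℝ) = ((k:ℝ)+1) * k.factorial := by
      push_cast [Nat.factorial_succ]; ring
    rw [h2]
    nlinarith [mul_le_mul_of_nonneg_left ih (show (0:ℝ) ≤ (k:ℝ)+1 by positivity)]

lemma S1 (q : ℝ) : Summable (fun k : ℕ => (k:ℝ) * q ^ k / k.factorial) := by
  apply (summable_nat_add_iff 1).mp
  apply Summable.congr ((Real.summable_pow_div_factorial q).mul_left q)
  intro k
  have hfac : ((k.factorial : ℝ)) ≠ 0 := by exact_mod_cast k.factorial_pos.ne'
  have h1 : (((k+1).factorial : ℝ)) = ((k:ℝ)+1) * k.factorial := by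
    push_cast [Nat.factorial_succ]; ring
  have h2 : ((k:ℝ)+1) ≠ 0 := by positivity
  push_cast [h1]
  field_simp
  ring

lemma S2 (q : ℝ) : Summable (fun k : ℕ => (k:ℝ)^2 * q ^ k / k.factorial) := by
  apply (summable_nat_add_iff 1).mp
  apply Summable.congr (((S1 q).mul_left q).add ((Real.summable_pow_div_factorial q).mul_left q))
  intro k
  have hfac : ((k.factorial : ℝ)) ≠ 0 := by exact_mod_cast k.factorial_pos.ne'
  have h1 : (((k+1).factorial : ℝ)) = ((k:ℝ)+1) * k.factorial := by
    push_cast [Nat.factorial_succ]; ring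
  have h2 : ((k:ℝ)+1) ≠ 0 := by positivity
  push_cast [h1]
  field_simp
  ring

lemma SM (q : ℝ) : Summable (fun k : ℕ => (2*(k:ℝ)+2)^2 * q ^ k / k.factorial) := by
  apply Summable.congr ((((S2 q).mul_left 4).add ((S1 q).mul_left 8)).add
    ((Real.summable_pow_div_factorial q).mul_left 4))
  intro k
  field_simp
  ring

/-- dominating sequence on the ball of radius ρ -/
def u (μ c ρ : ℝ) (k : ℕ) : ℝ := A μ c k * (2*(k:ℝ)+2)^2 * ρ ^ (2*k)

lemma summable_u {μ c : ℝ} (hμ : 0 ≤ μ) (hc : 0 < c) (ρ : ℝ) : Summable (u μ c ρ) := by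
  have hΓ1 := Real.Gamma_pos_of_pos (show (0:ℝ) < μ+1 by positivity)
  have hSM : Summable (fun k : ℕ =>
      1/Real.Gamma (μ+1) * ((2*(k:ℝ)+2)^2 * (c*ρ^2) ^ k / (k.factorial : ℝ))) :=
    (SM (c*ρ^2)).mul_left _
  apply Summable.of_nonneg_of_le (fun k => ?_) (fun k => ?_) hSM
  · have := A_pos hμ hc k
    rw [u, pow_mul]
    positivity
  · have hfac : (0:ℝ) < (k.factorial : ℝ) := by exact_mod_cast k.factorial_pos
    have hone : (1:ℝ) ≤ (k.factorial : ℝ) := by exact_mod_cast k.factorial_pos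
    have hΓk := fact_Gamma_le hμ k
    have hΓkpos := Real.Gamma_pos_of_pos (show (0:ℝ) < (k:ℝ)+μ+1 by positivity)
    have hnum : (0:ℝ) ≤ (2*(k:ℝ)+2)^2 * (c*ρ^2)^k := by positivity
    have key : (k.factorial : ℝ) * Real.Gamma (μ+1) ≤ (k.factorial : ℝ) * Real.Gamma ((k:ℝ)+μ+1) := by
      nlinarith
    calc u μ c ρ k = (2*(k:ℝ)+2)^2 * (c*ρ^2)^k / (k.factorial * Real.Gamma ((k:ℝ)+μ+1)) := by
            unfold u A; rw [mul_pow, pow_mul]; ring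
      _ ≤ (2*(k:ℝ)+2)^2 * (c*ρ^2)^k / (k.factorial * Real.Gamma (μ+1)) := by
            apply div_le_div_of_nonneg_left hnum (by positivity) key
      _ = 1/Real.Gamma (μ+1) * ((2*(k:ℝ)+2)^2 * (c*ρ^2)^k / k.factorial) := by
            rw [one_div, inv_mul_eq_div, div_div]

lemma abs_term_le {a b B y ρ : ℝ} (ha : 0 < a) (hb : |b| ≤ B) (e m : ℕ)
    (hy : |y| ≤ ρ) (hρ : 1 ≤ ρ) (hem : e ≤ m) : |a * b * y ^ e| ≤ a * B * ρ ^ m := by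
  have h1 : |y|^e ≤ ρ^m :=
    le_trans (pow_le_pow_left₀ (abs_nonneg y) hy e) (pow_le_pow_right₀ hρ hem)
  have hB : 0 ≤ B := le_trans (abs_nonneg b) hb
  rw [abs_mul, abs_mul, abs_of_pos ha, abs_pow]
  have h2 : a * |b| ≤ a * B := by nlinarith
  have h3 : 0 ≤ a * |b| := by positivity
  nlinarith [pow_nonneg (abs_nonneg y) e, pow_nonneg (le_trans zero_le_one hρ) m]

def G0 (μ c r : ℝ) : ℝ := ∑' k : ℕ, A μ c k * r ^ (2*k)
def G1 (μ c r : ℝ) : ℝ := ∑' k : ℕ, A μ c k * (2*(k:ℝ)) * r ^ (2*k-1)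
def G2 (μ c r : ℝ) : ℝ := ∑' k : ℕ, A μ c k * (2*(k:ℝ)) * (2*(k:ℝ)-1) * r ^ (2*k-2)

lemma bound0 {μ c : ℝ} (hμ : 0 ≤ μ) (hc : 0 < c) (r ρ : ℝ) (hy : |r| ≤ ρ) (hρ : 1 ≤ ρ) (k : ℕ) :
    ‖A μ c k * r ^ (2*k)‖ ≤ u μ c ρ k := by
  have hk0 : (0:ℝ) ≤ (k:ℝ) := Nat.cast_nonneg k
  have h := abs_term_le (A_pos hμ hc k) (b := 1) (B := (2*(k:ℝ)+2)^2)
    (by rw [abs_one]; nlinarith [sq_nonneg ((k:ℝ))]) (2*k) (2*k) hy hρ le_rfl (y := r)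
  rw [Real.norm_eq_abs]
  calc |A μ c k * r ^ (2*k)| = |A μ c k * 1 * r ^ (2*k)| := by rw [mul_one]
    _ ≤ A μ c k * (2*(k:ℝ)+2)^2 * ρ ^ (2*k) := h
    _ = u μ c ρ k := rfl

lemma bound1 {μ c : ℝ} (hμ : 0 ≤ μ) (hc : 0 < c) (r ρ : ℝ) (hy : |r| ≤ ρ) (hρ : 1 ≤ ρ) (k : ℕ) :
    ‖A μ c k * (2*(k:ℝ)) * r ^ (2*k-1)‖ ≤ u μ c ρ k := by
  have hk0 : (0:ℝ) ≤ (k:ℝ) := Nat.cast_nonneg k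
  have h := abs_term_le (A_pos hμ hc k) (b := 2*(k:ℝ)) (B := (2*(k:ℝ)+2)^2)
    (by rw [abs_of_nonneg (by positivity)]; nlinarith [sq_nonneg ((k:ℝ))])
    (2*k-1) (2*k) hy hρ (Nat.sub_le _ _) (y := r)
  rw [Real.norm_eq_abs]
  exact h

lemma bound2 {μ c : ℝ} (hμ : 0 ≤ μ) (hc : 0 < c) (r ρ : ℝ) (hy : |r| ≤ ρ) (hρ : 1 ≤ ρ) (k : ℕ) :
    ‖A μ c k * (2*(k:ℝ)) * (2*(k:ℝ)-1) * r ^ (2*k-2)‖ ≤ u μ c ρ k := by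
  have hk0 : (0:ℝ) ≤ (k:ℝ) := Nat.cast_nonneg k
  have habs : |2*(k:ℝ) * (2*(k:ℝ)-1)| ≤ (2*(k:ℝ)+2)^2 := by
    rcases k with _ | m
    · norm_num
    · have h1 : (1:ℝ) ≤ ((m+1 : ℕ):ℝ) := by exact_mod_cast Nat.one_le_iff_ne_zero.mpr (Nat.succ_ne_zero m)
      rw [abs_of_nonneg (by nlinarith)]
      nlinarith
  have h := abs_term_le (A_pos hμ hc k) (b := 2*(k:ℝ) * (2*(k:ℝ)-1)) (B := (2*(k:ℝ)+2)^2)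
    habs (2*k-2) (2*k) hy hρ (Nat.sub_le _ _) (y := r)
  rw [Real.norm_eq_abs,
    show A μ c k * (2*(k:ℝ)) * (2*(k:ℝ)-1) * r ^ (2*k-2)
      = A μ c k * (2*(k:ℝ) * (2*(k:ℝ)-1)) * r ^ (2*k-2) from by ring]
  exact h

lemma summable_G0 {μ c : ℝ} (hμ : 0 ≤ μ) (hc : 0 < c) (r : ℝ) :
    Summable (fun k : ℕ => A μ c k * r ^ (2*k)) :=
  Summable.of_norm_bounded (summable_u hμ hc (|r|+1))
    (bound0 hμ hc r _ (by linarith [abs_nonneg r]) (by linarith [abs_nonneg r]))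

lemma summable_G1 {μ c : ℝ} (hμ : 0 ≤ μ) (hc : 0 < c) (r : ℝ) :
    Summable (fun k : ℕ => A μ c k * (2*(k:ℝ)) * r ^ (2*k-1)) :=
  Summable.of_norm_bounded (summable_u hμ hc (|r|+1))
    (bound1 hμ hc r _ (by linarith [abs_nonneg r]) (by linarith [abs_nonneg r]))

lemma summable_G2 {μ c : ℝ} (hμ : 0 ≤ μ) (hc : 0 < c) (r : ℝ) :
    Summable (fun k : ℕ => A μ c k * (2*(k:ℝ)) * (2*(k:ℝ)-1) * r ^ (2*k-2)) :=
  Summable.of_norm_bounded (summable_u hμ hc (|r|+1))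
    (bound2 hμ hc r _ (by linarith [abs_nonneg r]) (by linarith [abs_nonneg r]))

lemma hasDerivAt_G0 {μ c : ℝ} (hμ : 0 ≤ μ) (hc : 0 < c) (r : ℝ) :
    HasDerivAt (G0 μ c) (G1 μ c r) r := by
  have hball : r ∈ ball (0:ℝ) (|r|+1) := by simp [Real.dist_eq]
  refine hasDerivAt_tsum_of_isPreconnected (summable_u hμ hc (|r|+1)) isOpen_ball
      (convex_ball _ _).isPreconnected
      (g := fun k x => A μ c k * x ^ (2*k))
      (g' := fun k x => A μ c k * (2*(k:ℝ)) * x ^ (2*k-1))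
      (fun k y _ => ?_) (fun k y hy => ?_) hball (summable_G0 hμ hc r) hball
  · show HasDerivAt (fun x => A μ c k * x ^ (2*k)) (A μ c k * (2*(k:ℝ)) * y ^ (2*k-1)) y
    have h := (hasDerivAt_pow (2*k) y).const_mul (A μ c k)
    have he : A μ c k * (((2*k : ℕ):ℝ) * y ^ (2*k-1)) = A μ c k * (2*(k:ℝ)) * y ^ (2*k-1) := by
      push_cast; ring
    exact he ▸ h
  · have hy' : |y| ≤ |r| + 1 := by
      have := mem_ball_iff_norm.mp hy
      simp only [sub_zero, Real.norm_eq_abs] at this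
      linarith
    exact bound1 hμ hc y _ hy' (by linarith [abs_nonneg r]) k

lemma hasDerivAt_G1 {μ c : ℝ} (hμ : 0 ≤ μ) (hc : 0 < c) (r : ℝ) :
    HasDerivAt (G1 μ c) (G2 μ c r) r := by
  have hball : r ∈ ball (0:ℝ) (|r|+1) := by simp [Real.dist_eq]
  refine hasDerivAt_tsum_of_isPreconnected (summable_u hμ hc (|r|+1)) isOpen_ball
      (convex_ball _ _).isPreconnected
      (g := fun k x => A μ c k * (2*(k:ℝ)) * x ^ (2*k-1))
      (g' := fun k x => A μ c k * (2*(k:ℝ)) * (2*(k:ℝ)-1) * x ^ (2*k-2))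
      (fun k y _ => ?_) (fun k y hy => ?_) hball (summable_G1 hμ hc r) hball
  · show HasDerivAt (fun x => A μ c k * (2*(k:ℝ)) * x ^ (2*k-1))
        (A μ c k * (2*(k:ℝ)) * (2*(k:ℝ)-1) * y ^ (2*k-2)) y
    have h := (hasDerivAt_pow (2*k-1) y).const_mul (A μ c k * (2*(k:ℝ)))
    have he : A μ c k * (2*(k:ℝ)) * (((2*k-1 : ℕ):ℝ) * y ^ (2*k-1-1))
        = A μ c k * (2*(k:ℝ)) * (2*(k:ℝ)-1) * y ^ (2*k-2) := by
      rcases k with _ | m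
      · norm_num
      · have h1 : ((2*(m+1)-1 : ℕ):ℝ) = 2*((m+1:ℕ):ℝ)-1 := by
          push_cast [Nat.cast_sub (by omega : 1 ≤ 2*(m+1))]
          ring
        rw [h1, show 2*(m+1)-1-1 = 2*(m+1)-2 from by omega]
        ring
    exact he ▸ h
  · have hy' : |y| ≤ |r| + 1 := by
      have := mem_ball_iff_norm.mp hy
      simp only [sub_zero, Real.norm_eq_abs] at this
      linarith
    exact bound2 hμ hc y _ hy' (by linarith [abs_nonneg r]) k

lemma G0_pos {μ c : ℝ} (hμ : 0 ≤ μ) (hc : 0 < c) (r : ℝ) : 0 < G0 μ c r := by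
  apply Summable.tsum_pos (summable_G0 hμ hc r) (fun k => ?_) 0
  · simp only [Nat.mul_zero, pow_zero, mul_one]
    exact A_pos hμ hc 0
  · have h1 : 0 ≤ r ^ (2*k) := by rw [pow_mul]; positivity
    exact mul_nonneg (A_pos hμ hc k).le h1

lemma G_ode {μ c : ℝ} (hμ : 0 ≤ μ) (hc : 0 < c) {r : ℝ} (hr : r ≠ 0) :
    G2 μ c r + (2*μ+1)/r * G1 μ c r = 4*c*G0 μ c r := by
  have hs1 := summable_G1 hμ hc r
  have hs2 := summable_G2 hμ hc r
  rw [G2, G1, G0, ← tsum_mul_left, ← tsum_mul_left,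
    ← Summable.tsum_add hs2 (hs1.mul_left ((2*μ+1)/r))]
  rw [Summable.tsum_eq_zero_add (hs2.add (hs1.mul_left ((2*μ+1)/r)))]
  have h0 : A μ c 0 * (2*((0:ℕ):ℝ)) * (2*((0:ℕ):ℝ)-1) * r ^ (2*0-2)
      + (2*μ+1)/r * (A μ c 0 * (2*((0:ℕ):ℝ)) * r ^ (2*0-1)) = 0 := by
    norm_num
  rw [h0, zero_add]
  apply tsum_congr
  intro k
  have hrec := A_succ c hμ k
  have e2 : 2*(k+1)-2 = 2*k := by omega
  have e1 : 2*(k+1)-1 = 2*k+1 := by omega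
  push_cast
  rw [e2, e1, pow_succ]
  have ediv : (2*μ+1)/r * (A μ c (k+1) * (2*((k:ℝ)+1)) * (r^(2*k)*r))
      = (2*μ+1) * (A μ c (k+1) * (2*((k:ℝ)+1)) * r^(2*k)) := by
    field_simp
  rw [ediv]
  linear_combination (4 * r^(2*k)) * hrec

lemma G1_eq {μ c : ℝ} (hμ : 0 ≤ μ) (hc : 0 < c) (r : ℝ) :
    G1 μ c r = 2*c*r * G0 (μ+1) c r := by
  rw [G1, Summable.tsum_eq_zero_add (summable_G1 hμ hc r)]
  have h0 : A μ c 0 * (2*((0:ℕ):ℝ)) * r ^ (2*0-1) = 0 := by norm_num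
  rw [h0, zero_add, G0, ← tsum_mul_left]
  apply tsum_congr
  intro k
  have hrec := A_shift c hμ k
  have e1 : 2*(k+1)-1 = 2*k+1 := by omega
  push_cast
  rw [e1, pow_succ]
  linear_combination (r^(2*k) * r) * hrec

lemma besselI_eq {τ x : ℝ} (hτ : 0 < τ) (hx : 0 < x) (μ : ℝ) :
    besselI μ (Real.sqrt τ * x) = (Real.sqrt τ/2)^μ * x^μ * G0 μ (τ/4) x := by
  have hb : (0:ℝ) < Real.sqrt τ/2 := by positivity
  rw [besselI, G0, mul_assoc, ← tsum_mul_left, ← tsum_mul_left]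
  apply tsum_congr
  intro k
  have hbx : Real.sqrt τ * x / 2 = (Real.sqrt τ/2) * x := by ring
  rw [hbx, Real.mul_rpow hb.le hx.le, Real.rpow_add hb, Real.rpow_add hx,
    show (2*(k:ℝ)) = ((2*k : ℕ):ℝ) from by push_cast; ring,
    Real.rpow_natCast, Real.rpow_natCast, pow_mul, pow_mul,
    show (Real.sqrt τ/2)^2 = τ/4 from by
      rw [div_pow, Real.sq_sqrt hτ.le]; norm_num]
  unfold A
  rw [div_eq_mul_inv, div_eq_mul_inv]
  ring

def nuu (d : ℕ) : ℝ := (d:ℝ)/2 - 1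

def Kc (d : ℕ) (R τ : ℝ) : ℝ :=
  R / (d * τ ^ ((3:ℝ)/2)) *
    ((Real.sqrt τ / 2) ^ (nuu d) * R ^ (nuu d) / besselI (nuu d + 1) (Real.sqrt τ * R))

def c0 (d : ℕ) (R τ : ℝ) : ℝ :=
  R / (d * τ ^ ((3:ℝ)/2)) *
    (besselI (nuu d) (Real.sqrt τ * R) / besselI (nuu d + 1) (Real.sqrt τ * R))

def Wfun (d : ℕ) (R τ r : ℝ) : ℝ :=
  (R^2 - r^2)/(2*d*τ) + Kc d R τ * G0 (nuu d) (τ/4) r - c0 d R τ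

lemma nuu_nonneg {d : ℕ} (hd : 2 ≤ d) : 0 ≤ nuu d := by
  have h : (2:ℝ) ≤ (d:ℝ) := by exact_mod_cast hd
  unfold nuu; linarith

lemma torsion_eq_W {d : ℕ} (hd : 2 ≤ d) {R τ r : ℝ} (hR : 0 < R) (hτ : 0 < τ) (hr : 0 < r) :
    torsionW d R τ r = Wfun d R τ r := by
  have hb : besselI (nuu d) (Real.sqrt τ * r)
      = (Real.sqrt τ/2)^(nuu d) * r^(nuu d) * G0 (nuu d) (τ/4) r := besselI_eq hτ hr _
  have hrν : r ^ (nuu d) ≠ 0 := (Real.rpow_pos_of_pos hr _).ne'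
  have key : (r/R) ^ (-(nuu d)) = R ^ (nuu d) / r ^ (nuu d) := by
    rw [Real.rpow_neg (by positivity), Real.div_rpow hr.le hR.le, inv_div]
  have h2 : (Real.sqrt τ/2)^(nuu d) * r^(nuu d) * G0 (nuu d) (τ/4) r
        / besselI (nuu d + 1) (Real.sqrt τ * R) * (R ^ (nuu d) / r ^ (nuu d))
      = (Real.sqrt τ/2)^(nuu d) * R^(nuu d) / besselI (nuu d + 1) (Real.sqrt τ * R)
        * G0 (nuu d) (τ/4) r := by
    rw [div_mul_div_comm,
      show (Real.sqrt τ/2)^(nuu d) * r^(nuu d) * G0 (nuu d) (τ/4) r * R ^ (nuu d)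
        = r^(nuu d) * ((Real.sqrt τ/2)^(nuu d) * R^(nuu d) * G0 (nuu d) (τ/4) r) from by ring,
      show besselI (nuu d + 1) (Real.sqrt τ * R) * r ^ (nuu d)
        = r ^ (nuu d) * besselI (nuu d + 1) (Real.sqrt τ * R) from mul_comm _ _,
      mul_div_mul_left _ _ hrν, div_mul_eq_mul_div]
  show _ = Wfun d R τ r
  unfold Wfun Kc c0
  rw [show torsionW d R τ r
      = (R ^ 2 - r ^ 2) / (2 * d * τ) +
        R / (d * τ ^ ((3 : ℝ) / 2)) *
          ((besselI (nuu d) (Real.sqrt τ * r) / besselI (nuu d + 1) (Real.sqrt τ * R))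
              * (r / R) ^ (-(nuu d)) -
            besselI (nuu d) (Real.sqrt τ * R) / besselI (nuu d + 1) (Real.sqrt τ * R)) from rfl,
    hb, key, h2]
  ring

def W1 (d : ℕ) (R τ r : ℝ) : ℝ := -(2*r)/(2*d*τ) + Kc d R τ * G1 (nuu d) (τ/4) r
def W2 (d : ℕ) (R τ r : ℝ) : ℝ := -2/(2*d*τ) + Kc d R τ * G2 (nuu d) (τ/4) r

lemma hasDerivAt_W {d : ℕ} (hd : 2 ≤ d) {τ : ℝ} (R : ℝ) (hτ : 0 < τ) (r : ℝ) :
    HasDerivAt (Wfun d R τ) (W1 d R τ r) r := by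
  have hν := nuu_nonneg hd
  have hc : (0:ℝ) < τ/4 := by linarith
  have h1 : HasDerivAt (fun x : ℝ => (R^2 - x^2)/(2*d*τ)) (-(2*r)/(2*d*τ)) r := by
    have h := ((hasDerivAt_pow 2 r).const_sub (R^2)).div_const (2*d*τ)
    have e : -(((2:ℕ):ℝ) * r^(2-1))/(2*(d:ℝ)*τ) = -(2*r)/(2*(d:ℝ)*τ) := by norm_num
    exact e ▸ h
  have h2 : HasDerivAt (fun x : ℝ => Kc d R τ * G0 (nuu d) (τ/4) x)
      (Kc d R τ * G1 (nuu d) (τ/4) r) r := (hasDerivAt_G0 hν hc r).const_mul _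
  exact ((h1.add h2).sub_const (c0 d R τ))

lemma deriv_Wfun {d : ℕ} (hd : 2 ≤ d) {τ : ℝ} (R : ℝ) (hτ : 0 < τ) :
    deriv (Wfun d R τ) = W1 d R τ := funext fun r => (hasDerivAt_W hd R hτ r).deriv

lemma hasDerivAt_W1 {d : ℕ} (hd : 2 ≤ d) {τ : ℝ} (R : ℝ) (hτ : 0 < τ) (r : ℝ) :
    HasDerivAt (W1 d R τ) (W2 d R τ r) r := by
  have hν := nuu_nonneg hd
  have hc : (0:ℝ) < τ/4 := by linarith
  have h1 : HasDerivAt (fun x : ℝ => -(2*x)/(2*d*τ)) (-2/(2*d*τ)) r := by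
    have h := (((hasDerivAt_id r).const_mul (2:ℝ)).neg).div_const (2*d*τ)
    have e : -((2:ℝ)*1)/(2*(d:ℝ)*τ) = -2/(2*(d:ℝ)*τ) := by norm_num
    exact e ▸ h
  have h2 : HasDerivAt (fun x : ℝ => Kc d R τ * G1 (nuu d) (τ/4) x)
      (Kc d R τ * G2 (nuu d) (τ/4) r) r := (hasDerivAt_G1 hν hc r).const_mul _
  exact h1.add h2

lemma G_ode' {μ c : ℝ} (hμ : 0 ≤ μ) (hc : 0 < c) {r : ℝ} (hr : r ≠ 0) :
    r * G2 μ c r + (2*μ+1) * G1 μ c r = 4*c*r*G0 μ c r := by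
  have h := G_ode hμ hc hr
  have h2 := congrArg (fun z => r * z) h
  simp only [mul_add] at h2
  rw [show r * ((2*μ+1)/r * G1 μ c r) = (2*μ+1) * G1 μ c r * (r / r) from by ring,
    div_self hr, mul_one] at h2
  linarith [h2]

lemma radLap_Wfun {d : ℕ} (hd : 2 ≤ d) {R τ : ℝ} (hτ : 0 < τ) {r : ℝ} (hr : r ≠ 0) :
    radLap d (Wfun d R τ) r = -1/τ + τ * Kc d R τ * G0 (nuu d) (τ/4) r := by
  have hν := nuu_nonneg hd
  have hc : (0:ℝ) < τ/4 := by linarith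
  have hd0 : ((d:ℝ)) ≠ 0 := by
    have : (2:ℝ) ≤ (d:ℝ) := by exact_mod_cast hd
    linarith
  have hode := G_ode' hν hc hr
  have hd1 : ((d:ℝ)-1) = 2*(nuu d)+1 := by unfold nuu; ring
  rw [radLap, deriv_Wfun hd R hτ, (hasDerivAt_W1 hd R hτ r).deriv]
  unfold W1 W2
  rw [hd1]
  field_simp
  ring_nf
  ring_nf at hode
  linear_combination ((d:ℝ)*τ*Kc d R τ) * hode + r * hd1

lemma radLap_congr {d : ℕ} {f g : ℝ → ℝ} {x : ℝ} (h : f =ᶠ[nhds x] g) :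
    radLap d f x = radLap d g x := by
  unfold radLap
  rw [h.deriv_eq, (h.deriv).deriv_eq]

lemma radLap_F {d : ℕ} (hd : 2 ≤ d) {R τ : ℝ} (hτ : 0 < τ) {r : ℝ} (hr : r ≠ 0) :
    radLap d (fun s => -1/τ + τ * Kc d R τ * G0 (nuu d) (τ/4) s) r
      = τ^2 * Kc d R τ * G0 (nuu d) (τ/4) r := by
  have hν := nuu_nonneg hd
  have hc : (0:ℝ) < τ/4 := by linarith
  have hd1 : ((d:ℝ)-1) = 2*(nuu d)+1 := by unfold nuu; ring
  have hode := G_ode' hν hc hr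
  have h1 : ∀ x : ℝ, HasDerivAt (fun s => -1/τ + τ * Kc d R τ * G0 (nuu d) (τ/4) s)
      (τ * Kc d R τ * G1 (nuu d) (τ/4) x) x := fun x =>
    ((hasDerivAt_G0 hν hc x).const_mul _).const_add _
  have hder : deriv (fun s => -1/τ + τ * Kc d R τ * G0 (nuu d) (τ/4) s)
      = fun x => τ * Kc d R τ * G1 (nuu d) (τ/4) x := funext fun x => (h1 x).deriv
  have h2 : HasDerivAt (fun x => τ * Kc d R τ * G1 (nuu d) (τ/4) x)
      (τ * Kc d R τ * G2 (nuu d) (τ/4) r) r := (hasDerivAt_G1 hν hc r).const_mul _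
  rw [radLap, hder, h2.deriv, hd1]
  field_simp
  linear_combination (Kc d R τ) * hode

end T
open T

/-- `w` satisfies `Δ²w - τΔw = 1` in the ball of radius `R` and the clamped
boundary conditions `w(R) = 0`, `∂_n w(R) = 0`. -/
theorem torsionW_solves (d : ℕ) (hd : 2 ≤ d) (R τ : ℝ) (hR : 0 < R) (hτ : 0 < τ) :
    (∀ r ∈ Ioo (0 : ℝ) R,
        radLap d (radLap d (torsionW d R τ)) r - τ * radLap d (torsionW d R τ) r = 1) ∧
      torsionW d R τ R = 0 ∧ deriv (torsionW d R τ) R = 0 := by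
  have hν := nuu_nonneg hd
  have hc : (0:ℝ) < τ/4 := by linarith
  have hd0 : ((d:ℝ)) ≠ 0 := by
    have h2d : (2:ℝ) ≤ (d:ℝ) := by exact_mod_cast hd
    linarith
  have hev : ∀ x : ℝ, 0 < x → torsionW d R τ =ᶠ[nhds x] Wfun d R τ := fun x hx =>
    Filter.eventuallyEq_of_mem (Ioi_mem_nhds hx) (fun y hy => torsion_eq_W hd hR hτ hy)
  have hradW : ∀ x : ℝ, 0 < x → radLap d (torsionW d R τ) x
      = -1/τ + τ * Kc d R τ * G0 (nuu d) (τ/4) x := fun x hx => by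
    rw [radLap_congr (hev x hx), radLap_Wfun hd hτ hx.ne']
  refine ⟨fun r hr => ?_, ?_, ?_⟩
  · have hr0 : 0 < r := hr.1
    have hev2 : radLap d (torsionW d R τ) =ᶠ[nhds r]
        (fun s => -1/τ + τ * Kc d R τ * G0 (nuu d) (τ/4) s) :=
      Filter.eventuallyEq_of_mem (Ioi_mem_nhds hr0) (fun y hy => hradW y hy)
    rw [radLap_congr hev2, radLap_F hd hτ hr0.ne', hradW r hr0]
    field_simp
    ring
  · simp [torsionW, div_self hR.ne', Real.one_rpow]
  · rw [(hev R hR).deriv_eq, deriv_Wfun hd R hτ]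
    have hG' : 0 < G0 (nuu d + 1) (τ/4) R := G0_pos (by linarith) hc R
    have hb : (0:ℝ) < Real.sqrt τ / 2 := by positivity
    have hsq : Real.sqrt τ * Real.sqrt τ = τ := Real.mul_self_sqrt hτ.le
    have hst : (0:ℝ) < Real.sqrt τ := Real.sqrt_pos.mpr hτ
    have h32 : τ ^ ((3:ℝ)/2) = τ * Real.sqrt τ := by
      rw [show ((3:ℝ)/2) = 1 + 1/2 by norm_num, Real.rpow_add hτ, Real.rpow_one,
        ← Real.sqrt_eq_rpow]
    have hI : besselI (nuu d + 1) (Real.sqrt τ * R)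
        = (Real.sqrt τ/2)^(nuu d + 1) * R^(nuu d + 1) * G0 (nuu d + 1) (τ/4) R :=
      besselI_eq hτ hR _
    have hbν : (Real.sqrt τ/2)^(nuu d + 1) = (Real.sqrt τ/2)^(nuu d) * (Real.sqrt τ/2) :=
      Real.rpow_add_one hb.ne' _
    have hRν : R^(nuu d + 1) = R^(nuu d) * R := Real.rpow_add_one hR.ne' _
    have hbνpos : (0:ℝ) < (Real.sqrt τ/2)^(nuu d) := Real.rpow_pos_of_pos hb _
    have hRνpos : (0:ℝ) < R^(nuu d) := Real.rpow_pos_of_pos hR _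
    unfold W1 Kc
    rw [G1_eq hν hc R, hI, hbν, hRν, h32]
    have hsq2 : Real.sqrt τ ^ 2 = τ := Real.sq_sqrt hτ.le
    field_simp
    linear_combination (-(4*R)) * hsq2
end
end

section
/- The modified Bessel function ratio satisfies the asymptotic expansion x I_ν(x)/I_{ν+1}(x) = d + x²/(d+2) − x⁴/((d+2)²(d+4)) + o(x⁴) as x → 0, where ν = d/2 − 1 and d ≥ 1. -/
open MeasureTheory Real Metric Set

noncomputable section

open Asymptotics Filter Topology


namespace BesselRatioAux

lemma gamma_arg_pos {μ : ℝ} (hμ : 0 < μ + 1) (k : ℕ) : (0:ℝ) < (k:ℝ) + μ + 1 := by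
  have h := Nat.cast_nonneg (α := ℝ) k
  linarith

lemma gamma_tail_ge {μ : ℝ} (hμ : 0 < μ + 1) (k : ℕ) :
    Real.Gamma (μ + 4) ≤ Real.Gamma ((k:ℝ) + μ + 4) := by
  induction k with
  | zero => simp
  | succ n ih =>
    have hn := Nat.cast_nonneg (α := ℝ) n
    have hpos : (0:ℝ) < (n:ℝ) + μ + 4 := by linarith
    have h1 : ((n+1 : ℕ) : ℝ) + μ + 4 = ((n:ℝ) + μ + 4) + 1 := by push_cast; ring
    rw [h1, Real.Gamma_add_one (ne_of_gt hpos)]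
    have hg := Real.Gamma_pos_of_pos hpos
    have h2 : Real.Gamma ((n:ℝ) + μ + 4) ≤ ((n:ℝ) + μ + 4) * Real.Gamma ((n:ℝ) + μ + 4) :=
      le_mul_of_one_le_left hg.le (by linarith)
    linarith

lemma term_bound {μ : ℝ} (hμ : 0 < μ + 1) (t : ℝ) (k : ℕ) :
    ‖t ^ (k+3) / ((k+3).factorial * Real.Gamma (((k+3:ℕ):ℝ) + μ + 1))‖ ≤
      |t| ^ 3 / Real.Gamma (μ + 4) * (|t| ^ k / (k.factorial : ℝ)) := by
  have hΓ4 : 0 < Real.Gamma (μ + 4) := Real.Gamma_pos_of_pos (by linarith)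
  have hcast : (((k+3:ℕ)):ℝ) + μ + 1 = (k:ℝ) + μ + 4 := by push_cast; ring
  rw [hcast]
  have hn := Nat.cast_nonneg (α := ℝ) k
  have hΓ : 0 < Real.Gamma ((k:ℝ) + μ + 4) := Real.Gamma_pos_of_pos (by linarith)
  have hfac : (0:ℝ) < (k+3).factorial := by positivity
  have hfac2 : (0:ℝ) < k.factorial := by positivity
  rw [Real.norm_eq_abs, abs_div, abs_pow, abs_of_pos (by positivity : (0:ℝ) < ((k+3).factorial : ℝ) * Real.Gamma ((k:ℝ) + μ + 4))]
  have hR : |t| ^ 3 / Real.Gamma (μ + 4) * (|t| ^ k / (k.factorial : ℝ))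
      = |t| ^ (k+3) / ((k.factorial : ℝ) * Real.Gamma (μ + 4)) := by
    rw [pow_add]; ring
  rw [hR]
  apply div_le_div_of_nonneg_left (by positivity) (by positivity)
  have h1 : ((k.factorial : ℝ)) ≤ ((k+3).factorial : ℝ) := by
    exact_mod_cast Nat.factorial_le (by omega)
  have h2 := gamma_tail_ge hμ k
  calc (k.factorial : ℝ) * Real.Gamma (μ + 4)
      ≤ ((k+3).factorial : ℝ) * Real.Gamma (μ + 4) := by
        apply mul_le_mul_of_nonneg_right h1 hΓ4.le
    _ ≤ ((k+3).factorial : ℝ) * Real.Gamma ((k:ℝ) + μ + 4) := by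
        apply mul_le_mul_of_nonneg_left h2 (by positivity)

lemma summable_f {μ : ℝ} (hμ : 0 < μ + 1) (t : ℝ) :
    Summable (fun k : ℕ => t ^ k / (k.factorial * Real.Gamma ((k:ℝ) + μ + 1))) := by
  apply (summable_nat_add_iff 3).mp
  apply Summable.of_norm_bounded
    ((Real.summable_pow_div_factorial |t|).mul_left (|t| ^ 3 / Real.Gamma (μ + 4)))
  intro k
  exact term_bound hμ t k

end BesselRatioAux

namespace BesselRatioAux

lemma f_expand {μ : ℝ} (hμ : 0 < μ + 1) {t : ℝ} (ht0 : 0 ≤ t) (ht1 : t ≤ 1) :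
    |(∑' k : ℕ, t ^ k / (k.factorial * Real.Gamma ((k:ℝ) + μ + 1)))
      - (1 / Real.Gamma (μ + 1) + t / Real.Gamma (μ + 2) + t ^ 2 / (2 * Real.Gamma (μ + 3)))| ≤
    Real.exp 1 / Real.Gamma (μ + 4) * t ^ 3 := by
  have hΓ4 : 0 < Real.Gamma (μ + 4) := Real.Gamma_pos_of_pos (by linarith)
  have hΓpos : ∀ k : ℕ, 0 < Real.Gamma ((k:ℝ) + μ + 1) := fun k =>
    Real.Gamma_pos_of_pos (gamma_arg_pos hμ k)
  have hsum := summable_f hμ t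
  have hsplit := Summable.sum_add_tsum_nat_add 3 hsum
  have hhead : (∑ i ∈ Finset.range 3, t ^ i / (i.factorial * Real.Gamma ((i:ℝ) + μ + 1)))
      = 1 / Real.Gamma (μ + 1) + t / Real.Gamma (μ + 2) + t ^ 2 / (2 * Real.Gamma (μ + 3)) := by
    rw [Finset.sum_range_succ, Finset.sum_range_succ, Finset.sum_range_one]
    have e0 : ((0:ℕ):ℝ) + μ + 1 = μ + 1 := by push_cast; ring
    have e1 : ((1:ℕ):ℝ) + μ + 1 = μ + 2 := by push_cast; ring
    have e2 : ((2:ℕ):ℝ) + μ + 1 = μ + 3 := by push_cast; ring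
    rw [e0, e1, e2]
    norm_num [Nat.factorial]
  have hkey : (∑' k : ℕ, t ^ k / (k.factorial * Real.Gamma ((k:ℝ) + μ + 1)))
      - (1 / Real.Gamma (μ + 1) + t / Real.Gamma (μ + 2) + t ^ 2 / (2 * Real.Gamma (μ + 3)))
      = ∑' k : ℕ, t ^ (k+3) / ((k+3).factorial * Real.Gamma (((k+3:ℕ):ℝ) + μ + 1)) := by
    rw [← hsplit, hhead]; ring
  rw [hkey]
  have hshift : Summable (fun k : ℕ =>
      t ^ (k+3) / ((k+3).factorial * Real.Gamma (((k+3:ℕ):ℝ) + μ + 1))) :=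
    (summable_nat_add_iff 3).mpr hsum
  have hb : Summable (fun k : ℕ => t ^ 3 / Real.Gamma (μ + 4) * (t ^ k / (k.factorial : ℝ))) :=
    (Real.summable_pow_div_factorial t).mul_left _
  have hterm : ∀ k : ℕ, t ^ (k+3) / ((k+3).factorial * Real.Gamma (((k+3:ℕ):ℝ) + μ + 1))
      ≤ t ^ 3 / Real.Gamma (μ + 4) * (t ^ k / (k.factorial : ℝ)) := by
    intro k
    have := term_bound hμ t k
    rw [Real.norm_eq_abs, abs_of_nonneg, abs_of_nonneg ht0] at this
    · exact this
    · have := hΓpos (k+3)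
      positivity
  have hnonneg : ∀ k : ℕ, 0 ≤ t ^ (k+3) / ((k+3).factorial * Real.Gamma (((k+3:ℕ):ℝ) + μ + 1)) := by
    intro k
    have := hΓpos (k+3)
    positivity
  rw [abs_of_nonneg (tsum_nonneg hnonneg)]
  calc (∑' k : ℕ, t ^ (k+3) / ((k+3).factorial * Real.Gamma (((k+3:ℕ):ℝ) + μ + 1)))
      ≤ ∑' k : ℕ, t ^ 3 / Real.Gamma (μ + 4) * (t ^ k / (k.factorial : ℝ)) :=
        Summable.tsum_le_tsum hterm hshift hb
    _ = t ^ 3 / Real.Gamma (μ + 4) * ∑' k : ℕ, t ^ k / (k.factorial : ℝ) := tsum_mul_left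
    _ = t ^ 3 / Real.Gamma (μ + 4) * Real.exp t := by
        rw [Real.exp_eq_exp_ℝ, NormedSpace.exp_eq_tsum_div]
    _ ≤ t ^ 3 / Real.Gamma (μ + 4) * Real.exp 1 :=
        mul_le_mul_of_nonneg_left (Real.exp_le_exp.mpr ht1) (by positivity)
    _ = Real.exp 1 / Real.Gamma (μ + 4) * t ^ 3 := by ring

lemma besselI_eq' {μ : ℝ} {x : ℝ} (hx : 0 < x) :
    (∑' k : ℕ, (x / 2) ^ (2 * (k : ℝ) + μ) / ((Nat.factorial k : ℝ) * Real.Gamma (k + μ + 1)))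
      = (x/2) ^ μ * ∑' k : ℕ, (x^2/4) ^ k / (k.factorial * Real.Gamma ((k:ℝ) + μ + 1)) := by
  rw [← tsum_mul_left]
  apply tsum_congr
  intro k
  have hx2 : (0:ℝ) < x/2 := by linarith
  have h1 : (x/2 : ℝ) ^ (2*(k:ℝ) + μ) = (x/2) ^ μ * (x^2/4) ^ k := by
    rw [Real.rpow_add hx2]
    have h2 : (2*(k:ℝ)) = ((2*k : ℕ) : ℝ) := by push_cast; ring
    rw [h2, Real.rpow_natCast, pow_mul]
    have h3 : (x/2)^(2:ℕ) = x^2/4 := by ring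
    rw [h3, mul_comm]
  rw [h1, mul_div_assoc]

end BesselRatioAux

namespace BesselRatioAux

lemma g2_lower (D G t g2 C2 : ℝ) (hD : 1 ≤ D) (hG : 0 < G) (hC2 : 0 ≤ C2)
    (ht0 : 0 < t) (ht1 : t ≤ 1)
    (e2 : |g2 - (2/(D*G) + 4*t/(D*(D+2)*G) + 4*t^2/(D*(D+2)*(D+4)*G))| ≤ C2 * t^3)
    (htδ : C2 * t ≤ 1/(D*G)) : 1/(D*G) ≤ g2 := by
  have hDpos : (0:ℝ) < D := by linarith
  have hD2 : (0:ℝ) < D + 2 := by linarith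
  have hD4 : (0:ℝ) < D + 4 := by linarith
  have h1 := (abs_le.mp e2).1
  have h2 : 0 ≤ 4*t/(D*(D+2)*G) := div_nonneg (by linarith) (by positivity)
  have h3 : 0 ≤ 4*t^2/(D*(D+2)*(D+4)*G) := div_nonneg (by positivity) (by positivity)
  have ht3 : t^3 ≤ t := by nlinarith
  have h4 : C2 * t^3 ≤ C2 * t := mul_le_mul_of_nonneg_left ht3 hC2
  have h5 : (2:ℝ)/(D*G) = 1/(D*G) + 1/(D*G) := by ring
  linarith

lemma habs_aux (D t : ℝ) (hD : 1 ≤ D) (ht0 : 0 ≤ t) (ht1 : t ≤ 1) :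
    |16*(2-D)*(D+4) + 64*t| ≤ 16*(D+2)*(D+4)+64 := by
  rw [abs_le]; constructor <;> nlinarith

lemma pbound_aux (D t : ℝ) (hD : 1 ≤ D) (ht0 : 0 ≤ t) (ht1 : t ≤ 1) :
    |D + 4*t/(D+2) - 16*t^2/((D+2)^2*(D+4))| ≤ D + 20 := by
  have hD2 : (0:ℝ) < D + 2 := by linarith
  have hD4 : (0:ℝ) < D + 4 := by linarith
  have ha : 0 ≤ 4 * t / (D + 2) := div_nonneg (by linarith) hD2.le
  have hb : 4 * t / (D + 2) ≤ 4 := by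
    rw [div_le_iff₀ hD2]; nlinarith
  have hc : 0 ≤ 16 * t ^ 2 / ((D + 2) ^ 2 * (D + 4)) :=
    div_nonneg (by positivity) (by positivity)
  have hd2 : 16 * t ^ 2 / ((D + 2) ^ 2 * (D + 4)) ≤ 16 := by
    rw [div_le_iff₀ (by positivity : (0:ℝ) < (D + 2) ^ 2 * (D + 4))]; nlinarith
  rw [abs_le]; constructor <;> linarith

set_option maxHeartbeats 1000000 in
lemma key_identity (D G t : ℝ) (hD : 1 ≤ D) (hG : 0 < G) :
    2*(1/G + 2*t/(D*G) + 2*t^2/(D*(D+2)*G))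
      - (D + 4*t/(D+2) - 16*t^2/((D+2)^2*(D+4))) *
        (2/(D*G) + 4*t/(D*(D+2)*G) + 4*t^2/(D*(D+2)*(D+4)*G))
    = t^3 * ((16*(2-D)*(D+4) + 64*t) / (D*(D+2)^3*(D+4)^2*G)) := by
  have hDpos : (0:ℝ) < D := by linarith
  have hD2 : (0:ℝ) < D + 2 := by linarith
  have hD4 : (0:ℝ) < D + 4 := by linarith
  field_simp [hDpos.ne', hD2.ne', hD4.ne', hG.ne']
  ring

set_option maxHeartbeats 1000000 in
lemma ratio_bound (D G t g1 g2 C1 C2 : ℝ)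
    (hD : 1 ≤ D) (hG : 0 < G) (hC1 : 0 ≤ C1) (hC2 : 0 ≤ C2)
    (ht0 : 0 < t) (ht1 : t ≤ 1)
    (e1 : |g1 - (1/G + 2*t/(D*G) + 2*t^2/(D*(D+2)*G))| ≤ C1 * t^3)
    (e2 : |g2 - (2/(D*G) + 4*t/(D*(D+2)*G) + 4*t^2/(D*(D+2)*(D+4)*G))| ≤ C2 * t^3)
    (hg2 : 1/(D*G) ≤ g2) :
    |2*g1/g2 - (D + 4*t/(D+2) - 16*t^2/((D+2)^2*(D+4)))| ≤
      (((16*(D+2)*(D+4)+64)/(D*(D+2)^3*(D+4)^2*G) + 2*C1 + (D+20)*C2) * (D*G)) * t^3 := by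
  have hDpos : (0:ℝ) < D := by linarith
  have hD2 : (0:ℝ) < D + 2 := by linarith
  have hD4 : (0:ℝ) < D + 4 := by linarith
  have hDG : 0 < D * G := mul_pos hDpos hG
  have hg2pos : 0 < g2 := lt_of_lt_of_le (by positivity) hg2
  have hden : 0 < D*(D+2)^3*(D+4)^2*G :=
    mul_pos (mul_pos (mul_pos hDpos (pow_pos hD2 3)) (pow_pos hD4 2)) hG
  have habs := habs_aux D t hD ht0.le ht1
  have hPb := pbound_aux D t hD ht0.le ht1
  have hkey := key_identity D G t hD hG
  set S1 := 1/G + 2*t/(D*G) + 2*t^2/(D*(D+2)*G) with hS1def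
  set S2 := 2/(D*G) + 4*t/(D*(D+2)*G) + 4*t^2/(D*(D+2)*(D+4)*G) with hS2def
  set P := D + 4*t/(D+2) - 16*t^2/((D+2)^2*(D+4)) with hPdef
  have hA : |2*S1 - P*S2| ≤ (16*(D+2)*(D+4)+64)/(D*(D+2)^3*(D+4)^2*G) * t^3 := by
    rw [hkey, abs_mul, abs_of_nonneg (pow_nonneg ht0.le 3), abs_div, abs_of_pos hden]
    calc t^3 * (|16*(2-D)*(D+4) + 64*t|/(D*(D+2)^3*(D+4)^2*G))
        ≤ t^3 * ((16*(D+2)*(D+4)+64)/(D*(D+2)^3*(D+4)^2*G)) := by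
          apply mul_le_mul_of_nonneg_left _ (pow_nonneg ht0.le 3)
          exact (div_le_div_iff_of_pos_right hden).mpr habs
      _ = (16*(D+2)*(D+4)+64)/(D*(D+2)^3*(D+4)^2*G) * t^3 := by ring
  have hsplit : 2*g1/g2 - P = (2*g1 - P*g2)/g2 := by
    field_simp
  have hid : 2*g1 - P*g2 = (2*S1 - P*S2) + (2*g1 - 2*S1) + (-(P*(g2 - S2))) := by ring
  have hnum : |2*g1 - P*g2| ≤
      ((16*(D+2)*(D+4)+64)/(D*(D+2)^3*(D+4)^2*G) + 2*C1 + (D+20)*C2) * t^3 := by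
    rw [hid]
    refine le_trans (abs_add_three _ _ _) ?_
    have h1 : |2*g1 - 2*S1| ≤ 2*(C1*t^3) := by
      have he : 2*g1 - 2*S1 = 2*(g1 - S1) := by ring
      rw [he, abs_mul, abs_two]
      linarith [e1]
    have h2 : |-(P*(g2 - S2))| ≤ (D+20)*(C2*t^3) := by
      rw [abs_neg, abs_mul]
      exact mul_le_mul hPb e2 (abs_nonneg _) (by linarith)
    nlinarith [hA, h1, h2]
  have h1 : 1 ≤ g2 * (D*G) := by
    rw [← div_le_iff₀ hDG]; exact hg2
  have hK1nn : 0 ≤ (16*(D+2)*(D+4)+64)/(D*(D+2)^3*(D+4)^2*G) :=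
    div_nonneg (by nlinarith) hden.le
  have hKt : 0 ≤ ((16*(D+2)*(D+4)+64)/(D*(D+2)^3*(D+4)^2*G) + 2*C1 + (D+20)*C2) * t^3 := by
    apply mul_nonneg _ (pow_nonneg ht0.le 3)
    have : 0 ≤ (D+20)*C2 := mul_nonneg (by linarith) hC2
    linarith
  rw [hsplit, abs_div, abs_of_pos hg2pos, div_le_iff₀ hg2pos]
  calc |2*g1 - P*g2|
      ≤ ((16*(D+2)*(D+4)+64)/(D*(D+2)^3*(D+4)^2*G) + 2*C1 + (D+20)*C2) * t^3 := hnum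
    _ = (((16*(D+2)*(D+4)+64)/(D*(D+2)^3*(D+4)^2*G) + 2*C1 + (D+20)*C2) * t^3) * 1 := by ring
    _ ≤ (((16*(D+2)*(D+4)+64)/(D*(D+2)^3*(D+4)^2*G) + 2*C1 + (D+20)*C2) * t^3) * (g2*(D*G)) :=
        mul_le_mul_of_nonneg_left h1 hKt
    _ = ((((16*(D+2)*(D+4)+64)/(D*(D+2)^3*(D+4)^2*G) + 2*C1 + (D+20)*C2) * (D*G)) * t^3) * g2 := by
        ring

end BesselRatioAux


set_option maxHeartbeats 2000000 in
/-- Asymptotic expansion of the modified Bessel ratio as `x → 0⁺`: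
`x I_ν(x)/I_{ν+1}(x) = d + x²/(d+2) - x⁴/((d+2)²(d+4)) + o(x⁴)`, with `ν = d/2 - 1`. -/
theorem bessel_ratio_expansion (d : ℕ) (hd : 1 ≤ d) :
    (fun x : ℝ =>
        x * besselI ((d : ℝ) / 2 - 1) x / besselI ((d : ℝ) / 2 - 1 + 1) x -
          ((d : ℝ) + x ^ 2 / (d + 2) - x ^ 4 / ((d + 2) ^ 2 * (d + 4)))) =o[𝓝[>] (0 : ℝ)]
      fun x : ℝ => x ^ 4 := by
  have hD1 : (1:ℝ) ≤ (d:ℝ) := by exact_mod_cast hd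
  set D : ℝ := (d:ℝ) with hDdef
  set ν : ℝ := D / 2 - 1 with hνdef
  have hν1 : 0 < ν + 1 := by rw [hνdef]; linarith
  have hν2 : 0 < ν + 2 := by linarith
  have hν3 : 0 < ν + 3 := by linarith
  have hν1' : 0 < (ν + 1) + 1 := by linarith
  have hDpos : (0:ℝ) < D := by linarith
  have hD2 : (0:ℝ) < D + 2 := by linarith
  have hD4 : (0:ℝ) < D + 4 := by linarith
  have hG : 0 < Real.Gamma (ν + 1) := Real.Gamma_pos_of_pos hν1
  have hDG : 0 < D * Real.Gamma (ν + 1) := mul_pos hDpos hG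
  have hnu1 : ν + 1 = D / 2 := by rw [hνdef]; ring
  have hnu2 : ν + 2 = (D + 2) / 2 := by rw [hνdef]; ring
  have hnu3 : ν + 3 = (D + 4) / 2 := by rw [hνdef]; ring
  have hΓ2 : Real.Gamma (ν + 2) = D / 2 * Real.Gamma (ν + 1) := by
    rw [show ν + 2 = (ν + 1) + 1 by ring, Real.Gamma_add_one hν1.ne']
    rw [hnu1]
  have hΓ3 : Real.Gamma (ν + 3) = (D + 2) / 2 * (D / 2 * Real.Gamma (ν + 1)) := by
    rw [show ν + 3 = (ν + 2) + 1 by ring, Real.Gamma_add_one hν2.ne', hΓ2, hnu2]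
  have hΓ4 : Real.Gamma (ν + 4) = (D + 4) / 2 * ((D + 2) / 2 * (D / 2 * Real.Gamma (ν + 1))) := by
    rw [show ν + 4 = (ν + 3) + 1 by ring, Real.Gamma_add_one hν3.ne', hΓ3, hnu3]
  have hΓ4pos : 0 < Real.Gamma (ν + 4) := Real.Gamma_pos_of_pos (by linarith)
  have hΓ5pos : 0 < Real.Gamma (ν + 1 + 4) := Real.Gamma_pos_of_pos (by linarith)
  have hC1pos : 0 < Real.exp 1 / Real.Gamma (ν + 4) := div_pos (Real.exp_pos 1) hΓ4pos
  have hC2pos : 0 < Real.exp 1 / Real.Gamma (ν + 1 + 4) := div_pos (Real.exp_pos 1) hΓ5pos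
  have hS1 : ∀ t : ℝ,
      1 / Real.Gamma (ν + 1) + t / Real.Gamma (ν + 2) + t ^ 2 / (2 * Real.Gamma (ν + 3))
        = 1 / Real.Gamma (ν + 1) + 2 * t / (D * Real.Gamma (ν + 1))
          + 2 * t ^ 2 / (D * (D + 2) * Real.Gamma (ν + 1)) := by
    intro t
    rw [hΓ2, hΓ3]
    field_simp
  have hS2 : ∀ t : ℝ,
      1 / Real.Gamma (ν + 1 + 1) + t / Real.Gamma (ν + 1 + 2) + t ^ 2 / (2 * Real.Gamma (ν + 1 + 3))
        = 2 / (D * Real.Gamma (ν + 1)) + 4 * t / (D * (D + 2) * Real.Gamma (ν + 1))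
          + 4 * t ^ 2 / (D * (D + 2) * (D + 4) * Real.Gamma (ν + 1)) := by
    intro t
    rw [show ν + 1 + 1 = ν + 2 by ring, show ν + 1 + 2 = ν + 3 by ring,
        show ν + 1 + 3 = ν + 4 by ring, hΓ2, hΓ3, hΓ4]
    field_simp
    ring
  set δt : ℝ := min 1 (1 / (D * Real.Gamma (ν + 1) * (Real.exp 1 / Real.Gamma (ν + 1 + 4))))
    with hδtdef
  have hδtpos : 0 < δt := lt_min one_pos (div_pos one_pos (mul_pos hDG hC2pos))
  have hδt1 : δt ≤ 1 := min_le_left _ _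
  obtain ⟨C, hC, hmain⟩ : ∃ C : ℝ, 0 < C ∧ ∀ x ∈ Set.Ioo (0:ℝ) (Real.sqrt δt),
      |x * besselI ν x / besselI (ν + 1) x
        - (D + x ^ 2 / (D + 2) - x ^ 4 / ((D + 2) ^ 2 * (D + 4)))| ≤ C * x ^ 6 := by
    have hdenpos : 0 < D * (D + 2) ^ 3 * (D + 4) ^ 2 * Real.Gamma (ν + 1) :=
      mul_pos (mul_pos (mul_pos hDpos (pow_pos hD2 3)) (pow_pos hD4 2)) hG
    have hK1pos : 0 < (16*(D+2)*(D+4)+64) / (D*(D+2)^3*(D+4)^2*Real.Gamma (ν + 1)) :=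
      div_pos (by nlinarith) hdenpos
    have hsumpos : 0 < (16*(D+2)*(D+4)+64)/(D*(D+2)^3*(D+4)^2*Real.Gamma (ν + 1))
        + 2*(Real.exp 1 / Real.Gamma (ν + 4)) + (D+20)*(Real.exp 1 / Real.Gamma (ν + 1 + 4)) := by
      have h1 : 0 < (D+20)*(Real.exp 1 / Real.Gamma (ν + 1 + 4)) :=
        mul_pos (by linarith) hC2pos
      linarith
    refine ⟨(((16*(D+2)*(D+4)+64)/(D*(D+2)^3*(D+4)^2*Real.Gamma (ν + 1))
        + 2*(Real.exp 1 / Real.Gamma (ν + 4)) + (D+20)*(Real.exp 1 / Real.Gamma (ν + 1 + 4)))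
        * (D*Real.Gamma (ν + 1))) / 64, by positivity, ?_⟩
    intro x hx
    obtain ⟨hx0, hxδ⟩ := hx
    have hsq : x ^ 2 < δt := by
      have h := mul_self_lt_mul_self hx0.le hxδ
      have hs := Real.sq_sqrt hδtpos.le
      nlinarith [h, hs]
    have ht0 : 0 < x ^ 2 / 4 := by positivity
    have htle : x ^ 2 / 4 ≤ 1 := by linarith
    have htδ : x ^ 2 / 4 ≤ 1 / (D * Real.Gamma (ν + 1) * (Real.exp 1 / Real.Gamma (ν + 1 + 4))) := by
      have h2 := min_le_right 1 (1 / (D * Real.Gamma (ν + 1) * (Real.exp 1 / Real.Gamma (ν + 1 + 4))))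
      rw [hδtdef] at hsq
      linarith
    have htδ' : (Real.exp 1 / Real.Gamma (ν + 1 + 4)) * (x ^ 2 / 4)
        ≤ 1 / (D * Real.Gamma (ν + 1)) := by
      have h3 : (Real.exp 1 / Real.Gamma (ν + 1 + 4)) * (x ^ 2 / 4)
          ≤ (Real.exp 1 / Real.Gamma (ν + 1 + 4)) *
            (1 / (D * Real.Gamma (ν + 1) * (Real.exp 1 / Real.Gamma (ν + 1 + 4)))) :=
        mul_le_mul_of_nonneg_left htδ hC2pos.le
      have heq : (Real.exp 1 / Real.Gamma (ν + 1 + 4)) *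
          (1 / (D * Real.Gamma (ν + 1) * (Real.exp 1 / Real.Gamma (ν + 1 + 4))))
          = 1 / (D * Real.Gamma (ν + 1)) := by
        field_simp
      linarith
    have e1 := BesselRatioAux.f_expand (μ := ν) hν1 ht0.le htle
    have e2 := BesselRatioAux.f_expand (μ := ν + 1) hν1' ht0.le htle
    rw [hS1 (x ^ 2 / 4)] at e1
    rw [hS2 (x ^ 2 / 4)] at e2
    have hb1 : besselI ν x = (x/2) ^ ν *
        ∑' k : ℕ, (x ^ 2 / 4) ^ k / (k.factorial * Real.Gamma ((k:ℝ) + ν + 1)) :=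
      BesselRatioAux.besselI_eq' hx0
    have hb2 : besselI (ν + 1) x = (x/2) ^ (ν + 1) *
        ∑' k : ℕ, (x ^ 2 / 4) ^ k / (k.factorial * Real.Gamma ((k:ℝ) + (ν + 1) + 1)) :=
      BesselRatioAux.besselI_eq' hx0
    set T1 : ℝ := ∑' k : ℕ, (x ^ 2 / 4) ^ k / (k.factorial * Real.Gamma ((k:ℝ) + ν + 1)) with hT1def
    set T2 : ℝ := ∑' k : ℕ, (x ^ 2 / 4) ^ k / (k.factorial * Real.Gamma ((k:ℝ) + (ν + 1) + 1)) with hT2def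
    have hg2low : 1 / (D * Real.Gamma (ν + 1)) ≤ T2 :=
      BesselRatioAux.g2_lower D (Real.Gamma (ν + 1)) (x ^ 2 / 4) T2
        (Real.exp 1 / Real.Gamma (ν + 1 + 4)) hD1 hG hC2pos.le ht0 htle e2 htδ'
    have hT2pos : 0 < T2 := lt_of_lt_of_le (by positivity) hg2low
    have hx2 : (0:ℝ) < x / 2 := by linarith
    have hrp : (0:ℝ) < (x / 2) ^ ν := Real.rpow_pos_of_pos hx2 ν
    have hrat : x * besselI ν x / besselI (ν + 1) x = 2 * T1 / T2 := by
      rw [hb1, hb2, Real.rpow_add_one hx2.ne']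
      field_simp
    have hfin := BesselRatioAux.ratio_bound D (Real.Gamma (ν + 1)) (x ^ 2 / 4) T1 T2
      (Real.exp 1 / Real.Gamma (ν + 4)) (Real.exp 1 / Real.Gamma (ν + 1 + 4))
      hD1 hG hC1pos.le hC2pos.le ht0 htle e1 e2 hg2low
    calc |x * besselI ν x / besselI (ν + 1) x - (D + x ^ 2 / (D + 2) - x ^ 4 / ((D + 2) ^ 2 * (D + 4)))|
        = |2 * T1 / T2 - (D + 4 * (x ^ 2 / 4) / (D + 2)
            - 16 * (x ^ 2 / 4) ^ 2 / ((D + 2) ^ 2 * (D + 4)))| := by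
          rw [hrat, show D + x ^ 2 / (D + 2) - x ^ 4 / ((D + 2) ^ 2 * (D + 4))
            = D + 4 * (x ^ 2 / 4) / (D + 2) - 16 * (x ^ 2 / 4) ^ 2 / ((D + 2) ^ 2 * (D + 4)) from by
              ring]
      _ ≤ (((16*(D+2)*(D+4)+64)/(D*(D+2)^3*(D+4)^2*Real.Gamma (ν + 1))
            + 2*(Real.exp 1 / Real.Gamma (ν + 4)) + (D+20)*(Real.exp 1 / Real.Gamma (ν + 1 + 4)))
            * (D*Real.Gamma (ν + 1))) * (x ^ 2 / 4) ^ 3 := hfin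
      _ = (((16*(D+2)*(D+4)+64)/(D*(D+2)^3*(D+4)^2*Real.Gamma (ν + 1))
            + 2*(Real.exp 1 / Real.Gamma (ν + 4)) + (D+20)*(Real.exp 1 / Real.Gamma (ν + 1 + 4)))
            * (D*Real.Gamma (ν + 1))) / 64 * x ^ 6 := by ring
  rw [isLittleO_iff]
  intro c hc
  have hccpos : 0 < c / C := div_pos hc hC
  have hδpos : 0 < min (Real.sqrt δt) (Real.sqrt (c / C)) :=
    lt_min (Real.sqrt_pos.mpr hδtpos) (Real.sqrt_pos.mpr hccpos)
  filter_upwards [Ioo_mem_nhdsGT_of_mem (Set.left_mem_Ico.mpr hδpos)] with x hx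
  have hx0 := hx.1
  have h1 : x < Real.sqrt δt := lt_of_lt_of_le hx.2 (min_le_left _ _)
  have h2 : x < Real.sqrt (c / C) := lt_of_lt_of_le hx.2 (min_le_right _ _)
  have hb := hmain x ⟨hx0, h1⟩
  have hx2c : x ^ 2 ≤ c / C := by
    have h := mul_self_lt_mul_self hx0.le h2
    have hs := Real.sq_sqrt hccpos.le
    nlinarith [h, hs]
  have hx2C : x ^ 2 * C ≤ c := (le_div_iff₀ hC).mp hx2c
  simp only [Real.norm_eq_abs]
  rw [abs_of_pos (pow_pos hx0 4)]
  calc |x * besselI ν x / besselI (ν + 1) x - (D + x ^ 2 / (D + 2) - x ^ 4 / ((D + 2) ^ 2 * (D + 4)))|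
      ≤ C * x ^ 6 := hb
    _ = (x ^ 2 * C) * x ^ 4 := by ring
    _ ≤ c * x ^ 4 := by nlinarith [mul_nonneg (sub_nonneg.mpr hx2C) (pow_pos hx0 4).le]
end
end

section
/- Let B_a ⊂ ℝ^d be the ball of radius a, τ > 0, and let h_a ∈ H²(B_a) be the radial function solving Δ²h_a − τΔh_a = 0 in B_a with h_a = 0, ∂_n h_a = 1 on ∂B_a, given by h_a(r) = (1/√τ)[ (I_ν(r√τ)/I_{ν+1}(a√τ)) (r/a)^{-ν} − I_ν(a√τ)/I_{ν+1}(a√τ) ]. Then ∫_{B_a} h_a = a^d (|B_1|/√τ)( d/(a√τ) − I_ν(a√τ)/I_{ν+1}(a√τ) ), and this quantity is negative. -/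
open MeasureTheory Real Metric Set

noncomputable section

/-- The radial function `h_a(r) = (1/√τ)[(I_ν(r√τ)/I_{ν+1}(a√τ))(r/a)^{-ν} - I_ν(a√τ)/I_{ν+1}(a√τ)]`,
with `ν = d/2 - 1`. -/
def hFun (d : ℕ) (a τ r : ℝ) : ℝ :=
  (1 / Real.sqrt τ) *
    ((besselI ((d : ℝ) / 2 - 1) (r * Real.sqrt τ) /
          besselI ((d : ℝ) / 2 - 1 + 1) (a * Real.sqrt τ)) * (r / a) ^ (-((d : ℝ) / 2 - 1)) -
      besselI ((d : ℝ) / 2 - 1) (a * Real.sqrt τ) /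
        besselI ((d : ℝ) / 2 - 1 + 1) (a * Real.sqrt τ))


/-- Auxiliary entire function: `F_μ(t) = Σ t^k / (k! Γ(k+μ+1))`. -/
def Fb (μ t : ℝ) : ℝ := ∑' k : ℕ, t ^ k / ((Nat.factorial k : ℝ) * Real.Gamma (k + μ + 1))

lemma Fb_gamma_pos {μ : ℝ} (hμ : -1 < μ) (k : ℕ) : 0 < Real.Gamma ((k : ℝ) + μ + 1) :=
  Real.Gamma_pos_of_pos (by have : (0:ℝ) ≤ k := Nat.cast_nonneg k; linarith)

lemma Fb_gamma_succ {μ : ℝ} (hμ : -1 < μ) (k : ℕ) :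
    Real.Gamma ((k : ℝ) + μ + 2) = ((k : ℝ) + μ + 1) * Real.Gamma ((k : ℝ) + μ + 1) := by
  have h := Real.Gamma_add_one (ne_of_gt (by have : (0:ℝ) ≤ k := Nat.cast_nonneg k; linarith : (0:ℝ) < (k : ℝ) + μ + 1))
  rw [show (k : ℝ) + μ + 2 = (k : ℝ) + μ + 1 + 1 by ring, h]

/-- Master summability lemma. -/
lemma Fb_summable_aux {μ : ℝ} (hμ : -1 < μ) (R : ℝ) :
    Summable (fun k : ℕ => ((k : ℝ) + 1) * R ^ k / ((Nat.factorial k : ℝ) * Real.Gamma (k + μ + 1))) := by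
  apply summable_of_ratio_norm_eventually_le (r := 1/2) (by norm_num)
  rw [Filter.eventually_atTop]
  refine ⟨⌈|μ|⌉₊ + ⌈4*|R|+4⌉₊, fun k hk => ?_⟩
  have h0 : (0:ℝ) ≤ k := Nat.cast_nonneg k
  have hkc : (⌈|μ|⌉₊ + ⌈4*|R|+4⌉₊ : ℝ) ≤ k := by exact_mod_cast Nat.cast_le.mpr hk
  have hc1 : |μ| ≤ (⌈|μ|⌉₊ : ℝ) := Nat.le_ceil _
  have hc2 : 4*|R|+4 ≤ (⌈4*|R|+4⌉₊ : ℝ) := Nat.le_ceil _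
  have h1 : 1 ≤ (k:ℝ) + μ + 1 := by
    have := abs_le.mp (le_refl |μ|) |>.1
    push_cast at hkc
    have hc2' : (0:ℝ) ≤ (⌈4*|R|+4⌉₊ : ℝ) := by positivity
    nlinarith [neg_abs_le μ]
  have h2 : 4*|R|+4 ≤ (k:ℝ) + 1 := by
    push_cast at hkc
    have : (0:ℝ) ≤ (⌈|μ|⌉₊ : ℝ) := by positivity
    linarith
  have hA : (0:ℝ) ≤ |R| := abs_nonneg R
  have hg1 := Fb_gamma_pos hμ k
  have hf1 : (0:ℝ) < (Nat.factorial k : ℝ) := by exact_mod_cast Nat.factorial_pos k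
  have norm_eq : ∀ j:ℕ, ‖((j:ℝ)+1) * R ^ j / ((Nat.factorial j : ℝ) * Real.Gamma (j + μ + 1))‖
      = ((j:ℝ)+1) * |R|^j / ((Nat.factorial j : ℝ) * Real.Gamma (j + μ + 1)) := by
    intro j
    have hfj : (0:ℝ) < (Nat.factorial j : ℝ) := by exact_mod_cast Nat.factorial_pos j
    rw [norm_div, norm_mul, norm_mul, Real.norm_eq_abs, Real.norm_eq_abs, Real.norm_eq_abs,
      Real.norm_eq_abs, abs_pow, abs_of_nonneg (by positivity : (0:ℝ) ≤ (j:ℝ)+1),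
      abs_of_pos hfj, abs_of_pos (Fb_gamma_pos hμ j)]
  rw [norm_eq (k+1), norm_eq k]
  have hcast : ((k+1 : ℕ) : ℝ) = (k:ℝ) + 1 := by push_cast; ring
  rw [hcast]
  have hfac : ((Nat.factorial (k+1) : ℕ) : ℝ) = ((k:ℝ)+1) * (Nat.factorial k : ℝ) := by
    rw [Nat.factorial_succ]; push_cast; ring
  rw [hfac, show (k:ℝ) + 1 + μ + 1 = (k:ℝ) + μ + 2 by ring, Fb_gamma_succ hμ k]
  have main : ((k:ℝ)+1+1)*|R|/(((k:ℝ)+1)*((k:ℝ)+μ+1)) ≤ ((k:ℝ)+1)/2 := by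
    rw [div_le_div_iff₀ (by nlinarith) (by norm_num)]
    nlinarith [mul_nonneg hA h0, mul_nonneg (mul_nonneg hA h0) h0, sq_nonneg ((k:ℝ)+1)]
  have base : (0:ℝ) ≤ |R|^k / ((Nat.factorial k : ℝ) * Real.Gamma ((k:ℝ) + μ + 1)) := by positivity
  calc ((k:ℝ)+1+1) * |R|^(k+1) / (((k:ℝ)+1) * (Nat.factorial k : ℝ) * (((k:ℝ)+μ+1) * Real.Gamma ((k:ℝ)+μ+1)))
      = (((k:ℝ)+1+1)*|R|/(((k:ℝ)+1)*((k:ℝ)+μ+1))) * (|R|^k / ((Nat.factorial k : ℝ) * Real.Gamma ((k:ℝ) + μ + 1))) := by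
        rw [pow_succ]; field_simp
    _ ≤ (((k:ℝ)+1)/2) * (|R|^k / ((Nat.factorial k : ℝ) * Real.Gamma ((k:ℝ) + μ + 1))) :=
        mul_le_mul_of_nonneg_right main base
    _ = 1/2 * (((k:ℝ)+1) * |R|^k / ((Nat.factorial k : ℝ) * Real.Gamma ((k:ℝ) + μ + 1))) := by ring

lemma Fb_summable {μ : ℝ} (hμ : -1 < μ) (t : ℝ) :
    Summable (fun k : ℕ => t ^ k / ((Nat.factorial k : ℝ) * Real.Gamma (k + μ + 1))) := by
  apply Summable.of_norm_bounded (Fb_summable_aux hμ |t|)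
  intro k
  have hfk : (0:ℝ) < (Nat.factorial k : ℝ) := by exact_mod_cast Nat.factorial_pos k
  have hg := Fb_gamma_pos hμ k
  rw [norm_div, Real.norm_eq_abs, Real.norm_eq_abs, abs_pow, abs_of_pos (by positivity : (0:ℝ) < (Nat.factorial k : ℝ) * Real.Gamma ((k:ℝ) + μ + 1))]
  gcongr
  nlinarith [pow_nonneg (abs_nonneg t) k, (Nat.cast_nonneg k : (0:ℝ) ≤ k)]

lemma Fb_pos {μ : ℝ} (hμ : -1 < μ) {t : ℝ} (ht : 0 ≤ t) : 0 < Fb μ t := by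
  apply Summable.tsum_pos (Fb_summable hμ t)
    (fun k => div_nonneg (pow_nonneg ht k)
      (mul_nonneg (Nat.cast_nonneg _) (Fb_gamma_pos hμ k).le)) 0
  have hg := Fb_gamma_pos hμ 0
  simp only [pow_zero, Nat.factorial_zero, Nat.cast_one, one_mul, Nat.cast_zero] at *
  exact div_pos one_pos hg

/-- The recurrence `F_μ(t) = (μ+1) F_{μ+1}(t) + t F_{μ+2}(t)`. -/
lemma Fb_rec {μ : ℝ} (hμ : -1 < μ) (t : ℝ) :
    Fb μ t = (μ + 1) * Fb (μ+1) t + t * Fb (μ+2) t := by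
  have hμ1 : -1 < μ + 1 := by linarith
  have hμ2 : -1 < μ + 2 := by linarith
  set a : ℕ → ℝ := fun k => t ^ k / ((Nat.factorial k : ℝ) * Real.Gamma (k + μ + 1)) with ha
  set b : ℕ → ℝ := fun k => (μ+1) * (t ^ k / ((Nat.factorial k : ℝ) * Real.Gamma (k + (μ+1) + 1))) with hb
  set A : ℕ → ℝ := fun k => (k:ℝ) * t ^ k / ((Nat.factorial k : ℝ) * Real.Gamma (k + μ + 2)) with hA
  have step1 : ∀ k, a k - b k = A k := by
    intro k
    have hg := Fb_gamma_pos hμ k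
    have hfk : (0:ℝ) < (Nat.factorial k : ℝ) := by exact_mod_cast Nat.factorial_pos k
    have hk1 : (0:ℝ) < (k:ℝ) + μ + 1 := by have := (Nat.cast_nonneg k : (0:ℝ) ≤ k); linarith
    simp only [ha, hb, hA, show (k:ℝ) + (μ+1) + 1 = (k:ℝ) + μ + 2 by ring, Fb_gamma_succ hμ k]
    field_simp
    ring
  have Sa : Summable a := Fb_summable hμ t
  have Sb : Summable b := by
    exact (Fb_summable hμ1 t).mul_left (μ+1)
  have SA : Summable A := by
    refine (Sa.sub Sb).congr fun k => (step1 k)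
  have step3 : Fb μ t - (μ + 1) * Fb (μ+1) t = ∑' k, A k := by
    rw [Fb, Fb, ← tsum_mul_left, ← Summable.tsum_sub Sa Sb]
    exact tsum_congr step1
  have step4 : ∑' k, A k = t * Fb (μ+2) t := by
    rw [Summable.tsum_eq_zero_add SA]
    have hA0 : A 0 = 0 := by simp [hA]
    rw [hA0, zero_add, Fb, ← tsum_mul_left]
    refine tsum_congr fun k => ?_
    have hg := Fb_gamma_pos hμ2 k
    have hfk : (0:ℝ) < (Nat.factorial k : ℝ) := by exact_mod_cast Nat.factorial_pos k
    simp only [hA, Nat.factorial_succ]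
    push_cast
    rw [show (k:ℝ) + 1 + μ + 2 = (k:ℝ) + (μ+2) + 1 by ring]
    rw [pow_succ]
    field_simp
  linarith

lemma Fb_hasDerivAt {μ : ℝ} (hμ : -1 < μ) (t : ℝ) : HasDerivAt (Fb μ) (Fb (μ+1) t) t := by
  have hμ1 : -1 < μ + 1 := by linarith
  set R : ℝ := |t| + 1 with hR
  have hR1 : 1 ≤ R := by rw [hR]; have := abs_nonneg t; linarith
  have hR0 : 0 < R := by linarith
  set g : ℕ → ℝ → ℝ := fun k x => x ^ k / ((Nat.factorial k : ℝ) * Real.Gamma (k + μ + 1)) with hg_def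
  set g' : ℕ → ℝ → ℝ := fun k x => (k:ℝ) * x ^ (k-1) / ((Nat.factorial k : ℝ) * Real.Gamma (k + μ + 1)) with hg'_def
  set u : ℕ → ℝ := fun k => (k:ℝ) * R ^ (k-1) / ((Nat.factorial k : ℝ) * Real.Gamma (k + μ + 1)) with hu_def
  have hu : Summable u := by
    refine Summable.of_nonneg_of_le (fun k => ?_) (fun k => ?_) (Fb_summable_aux hμ R)
    · 
      have := Fb_gamma_pos hμ k
      have hfk : (0:ℝ) < (Nat.factorial k : ℝ) := by exact_mod_cast Nat.factorial_pos k
      positivity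
    · have := Fb_gamma_pos hμ k
      have hfk : (0:ℝ) < (Nat.factorial k : ℝ) := by exact_mod_cast Nat.factorial_pos k
      have h1 : R ^ (k-1) ≤ R ^ k := pow_le_pow_right₀ hR1 (Nat.sub_le k 1)
      have h2 : (k:ℝ) ≤ (k:ℝ) + 1 := by linarith
      exact div_le_div₀ (by positivity)
        (mul_le_mul h2 h1 (by positivity) (by positivity)) (by positivity) le_rfl
  have hg : ∀ (k : ℕ) (y : ℝ), y ∈ ball (0:ℝ) R → HasDerivAt (g k) (g' k y) y := by
    intro k y _
    exact (hasDerivAt_pow k y).div_const _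
  have hg' : ∀ (k : ℕ) (y : ℝ), y ∈ ball (0:ℝ) R → ‖g' k y‖ ≤ u k := by
    intro k y hy
    rw [mem_ball, dist_zero_right, Real.norm_eq_abs] at hy
    have := Fb_gamma_pos hμ k
    have hfk : (0:ℝ) < (Nat.factorial k : ℝ) := by exact_mod_cast Nat.factorial_pos k
    rw [hg'_def, hu_def]
    beta_reduce
    rw [norm_div, norm_mul, Real.norm_eq_abs, Real.norm_eq_abs, abs_pow, Real.norm_eq_abs,
      abs_of_pos (by positivity : (0:ℝ) < (Nat.factorial k : ℝ) * Real.Gamma ((k:ℝ) + μ + 1)),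
      Nat.abs_cast]
    gcongr
  have htmem : t ∈ ball (0:ℝ) R := by
    rw [mem_ball, dist_zero_right, Real.norm_eq_abs]; linarith
  have key := hasDerivAt_tsum_of_isPreconnected hu isOpen_ball
    (convex_ball (0:ℝ) R).isPreconnected hg hg' htmem (Fb_summable hμ t) htmem
  have hsum_g' : Summable fun k => g' k t := by
    apply Summable.of_norm_bounded hu fun k => hg' k t htmem
  have hval : ∑' k, g' k t = Fb (μ+1) t := by
    rw [Summable.tsum_eq_zero_add hsum_g']
    have h0 : g' 0 t = 0 := by simp [hg'_def]
    rw [h0, zero_add, Fb]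
    refine tsum_congr fun k => ?_
    have hg2 := Fb_gamma_pos hμ1 k
    have hfk : (0:ℝ) < (Nat.factorial k : ℝ) := by exact_mod_cast Nat.factorial_pos k
    simp only [hg'_def, Nat.factorial_succ, Nat.add_sub_cancel]
    push_cast
    rw [show (k:ℝ) + 1 + μ + 1 = (k:ℝ) + (μ+1) + 1 by ring]
    field_simp
  rw [hval] at key
  exact key

lemma besselI_eq {μ : ℝ} {x : ℝ} (hx : 0 < x) :
    besselI μ x = (x/2) ^ μ * Fb μ ((x/2)^2) := by
  rw [besselI, Fb, ← tsum_mul_left]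
  refine tsum_congr fun k => ?_
  have h2 : (0:ℝ) < x/2 := by linarith
  have hexp : (x/2) ^ (2*(k:ℝ) + μ) = ((x/2)^2)^k * (x/2)^μ := by
    rw [Real.rpow_add h2]
    congr 1
    have h3 : (2*(k:ℝ)) = ((2*k : ℕ) : ℝ) := by push_cast; ring
    rw [h3, Real.rpow_natCast, pow_mul]
  rw [hexp]
  ring

/-- `G_μ(r) = F_μ(τ r²/4)`. -/
def Gg (μ τ r : ℝ) : ℝ := Fb μ (τ * r^2 / 4)

lemma Gg_hasDerivAt {μ : ℝ} (hμ : -1 < μ) (τ r : ℝ) :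
    HasDerivAt (Gg μ τ) (τ * r / 2 * Gg (μ+1) τ r) r := by
  have h1 : HasDerivAt (fun r : ℝ => τ * r^2 / 4) (τ * r / 2) r := by
    have h := ((hasDerivAt_pow 2 r).const_mul τ).div_const 4
    exact h.congr_deriv (by push_cast; ring)
  have h2 := (Fb_hasDerivAt hμ (τ * r^2/4)).comp r h1
  have : HasDerivAt (fun r : ℝ => Fb μ (τ * r^2/4)) (Fb (μ+1) (τ * r^2/4) * (τ * r / 2)) r := h2
  exact this.congr_deriv (by simp only [Gg]; ring)

lemma Gg_continuous {μ : ℝ} (hμ : -1 < μ) (τ : ℝ) : Continuous (Gg μ τ) := by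
  have : Differentiable ℝ (Gg μ τ) := fun r => (Gg_hasDerivAt hμ τ r).differentiableAt
  exact this.continuous

set_option maxHeartbeats 1000000 in
/-- `h_a` solves `Δ²h_a - τΔh_a = 0` in `B_a` with `h_a = 0`, `∂_n h_a = 1` on `∂B_a`;
its integral equals `a^d (|B₁|/√τ)(d/(a√τ) - I_ν(a√τ)/I_{ν+1}(a√τ))`, and this
quantity is negative. -/
theorem hFun_integral (d : ℕ) (hd : 2 ≤ d) (a τ : ℝ) (ha : 0 < a) (hτ : 0 < τ) :
    (∀ r ∈ Ioo (0 : ℝ) a,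
        radLap d (radLap d (hFun d a τ)) r - τ * radLap d (hFun d a τ) r = 0) ∧
      hFun d a τ a = 0 ∧ deriv (hFun d a τ) a = 1 ∧
      (∫ x in ball (0 : Euc d) a, hFun d a τ ‖x‖) =
        a ^ (d : ℕ) * ((volume (ball (0 : Euc d) 1)).toReal / Real.sqrt τ) *
          ((d : ℝ) / (a * Real.sqrt τ) -
            besselI ((d : ℝ) / 2 - 1) (a * Real.sqrt τ) /
              besselI ((d : ℝ) / 2 - 1 + 1) (a * Real.sqrt τ)) ∧
      a ^ (d : ℕ) * ((volume (ball (0 : Euc d) 1)).toReal / Real.sqrt τ) *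
          ((d : ℝ) / (a * Real.sqrt τ) -
            besselI ((d : ℝ) / 2 - 1) (a * Real.sqrt τ) /
              besselI ((d : ℝ) / 2 - 1 + 1) (a * Real.sqrt τ)) < 0 := by
  have hd0 : (0:ℝ) < d := by have h : 0 < d := by omega
                             exact_mod_cast h
  set ν : ℝ := (d:ℝ)/2 - 1 with hν
  have hd2 : (d:ℝ) = 2*(ν+1) := by rw [hν]; ring
  have hν0 : 0 ≤ ν := by
    rw [hν]
    have : (2:ℝ) ≤ d := by exact_mod_cast hd
    linarith
  have hν1 : -1 < ν := by linarith
  have hν2 : -1 < ν + 1 := by linarith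
  have hν3 : -1 < ν + 2 := by linarith
  set s : ℝ := Real.sqrt τ with hsdef
  have hs : 0 < s := Real.sqrt_pos.mpr hτ
  have hss : s * s = τ := Real.mul_self_sqrt hτ.le
  set α : ℝ := a * s with hαdef
  have hα : 0 < α := mul_pos ha hs
  have hsq : (α/2)^2 = τ * a^2 / 4 := by
    rw [div_pow, mul_pow, ← hss]; ring
  have ht0 : ∀ r : ℝ, 0 ≤ τ * r^2 / 4 := fun r => by positivity
  set B : ℝ := besselI (ν+1) α with hBdef
  set I0 : ℝ := besselI ν α with hI0def
  have hBe : B = (α/2)^(ν+1) * Gg (ν+1) τ a := by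
    rw [hBdef, besselI_eq hα, Gg, hsq]
  have hI0e : I0 = (α/2)^ν * Gg ν τ a := by
    rw [hI0def, besselI_eq hα, Gg, hsq]
  have hEpos : ∀ μ : ℝ, -1 < μ → ∀ r : ℝ, 0 < Gg μ τ r := fun μ hμ r => Fb_pos hμ (ht0 r)
  have hα2pos : (0:ℝ) < α/2 := by linarith
  have hrp : ∀ y : ℝ, 0 < (α/2)^(y:ℝ) := fun y => Real.rpow_pos_of_pos hα2pos y
  have hBpos : 0 < B := by rw [hBe]; exact mul_pos (hrp _) (hEpos _ hν2 a)
  set C1 : ℝ := (s/2)^(ν:ℝ) * a^(ν:ℝ) / (s * B) with hC1def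
  set C0 : ℝ := -I0 / (s * B) with hC0def
  set g : ℝ → ℝ := fun r => C1 * Gg ν τ r + C0 with hgdef
  -- hFun agrees with g on Ioi 0
  have hfg : ∀ r ∈ Ioi (0:ℝ), hFun d a τ r = g r := by
    intro r hr
    rw [mem_Ioi] at hr
    have hrs : 0 < r * s := mul_pos hr hs
    have hbr : besselI ν (r*s) = (r*s/2)^(ν:ℝ) * Gg ν τ r := by
      rw [besselI_eq hrs, Gg]
      congr 2
      rw [div_pow, mul_pow, ← hss]; ring
    have hpows : (r*s/2)^(ν:ℝ) * (r/a)^(-ν) = (s/2)^(ν:ℝ) * a^(ν:ℝ) := by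
      rw [show r*s/2 = r*(s/2) by ring, Real.mul_rpow hr.le (by linarith : (0:ℝ) ≤ s/2)]
      rw [Real.rpow_neg (by positivity : (0:ℝ) ≤ r/a), Real.div_rpow hr.le ha.le, inv_div]
      have hrne : r^(ν:ℝ) ≠ 0 := ne_of_gt (Real.rpow_pos_of_pos hr ν)
      field_simp
    rw [hFun, hgdef]
    simp only [← hν, ← hsdef, ← hαdef, ← hBdef, ← hI0def]
    rw [hbr, hC1def, hC0def]
    have hBne : (s * B) ≠ 0 := by positivity
    field_simp
    rw [show s*r/2 = r*s/2 by ring]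
    linear_combination (Gg ν τ r) * hpows
  -- recurrence for Gg
  have hrec' : ∀ r : ℝ, Gg ν τ r = (ν+1) * Gg (ν+1) τ r + (τ*r^2/4) * Gg (ν+2) τ r := by
    intro r
    have h := Fb_rec hν1 (τ * r^2/4)
    rw [Gg, Gg, Gg]
    exact h
  -- derivative of g
  have hg' : ∀ r : ℝ, HasDerivAt g (C1 * (τ*r/2) * Gg (ν+1) τ r) r := by
    intro r
    have h := ((Gg_hasDerivAt hν1 τ r).const_mul C1).add_const C0
    exact h.congr_deriv (by ring)
  set g1 : ℝ → ℝ := fun r => C1 * (τ*r/2) * Gg (ν+1) τ r with hg1def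
  have hg1' : ∀ r : ℝ, HasDerivAt g1
      (C1*(τ/2)*Gg (ν+1) τ r + C1*(τ*r/2)*(τ*r/2*Gg (ν+2) τ r)) r := by
    intro r
    have hG2 : HasDerivAt (Gg (ν+1) τ) (τ*r/2*Gg (ν+2) τ r) r := by
      rw [show ν+2 = ν+1+1 by ring]
      exact Gg_hasDerivAt hν2 τ r
    have hmul : HasDerivAt (fun x : ℝ => x * Gg (ν+1) τ x)
        (1 * Gg (ν+1) τ r + r * (τ*r/2*Gg (ν+2) τ r)) r :=
      (hasDerivAt_id r).mul hG2
    have heq : g1 = fun x : ℝ => (C1*(τ/2)) * (x * Gg (ν+1) τ x) := by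
      funext x; rw [hg1def]; ring
    rw [heq]
    exact (hmul.const_mul (C1*(τ/2))).congr_deriv (by ring)
  have hderiv_hFun : ∀ r ∈ Ioi (0:ℝ), deriv (hFun d a τ) r = g1 r := by
    intro r hr
    have hev : hFun d a τ =ᶠ[nhds r] g :=
      Filter.eventuallyEq_of_mem (isOpen_Ioi.mem_nhds hr) hfg
    rw [hev.deriv_eq, (hg' r).deriv]
  have hderiv2 : ∀ r ∈ Ioi (0:ℝ), deriv (deriv (hFun d a τ)) r
      = C1*(τ/2)*Gg (ν+1) τ r + C1*(τ*r/2)*(τ*r/2*Gg (ν+2) τ r) := by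
    intro r hr
    have hev : deriv (hFun d a τ) =ᶠ[nhds r] g1 :=
      Filter.eventuallyEq_of_mem (isOpen_Ioi.mem_nhds hr) hderiv_hFun
    rw [hev.deriv_eq, (hg1' r).deriv]
  have hradLap : ∀ r ∈ Ioi (0:ℝ), radLap d (hFun d a τ) r = τ * C1 * Gg ν τ r := by
    intro r hr
    have hrne : r ≠ 0 := ne_of_gt (mem_Ioi.mp hr)
    rw [radLap, hderiv2 r hr, hderiv_hFun r hr, hg1def]
    beta_reduce
    rw [hrec' r, hd2]
    field_simp
    ring
  have hderivL : ∀ r ∈ Ioi (0:ℝ), deriv (radLap d (hFun d a τ)) r = τ * g1 r := by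
    intro r hr
    have hev : radLap d (hFun d a τ) =ᶠ[nhds r] (fun x => τ * C1 * Gg ν τ x) :=
      Filter.eventuallyEq_of_mem (isOpen_Ioi.mem_nhds hr) hradLap
    rw [hev.deriv_eq, ((Gg_hasDerivAt hν1 τ r).const_mul (τ*C1)).deriv, hg1def]
    ring
  have hderivL2 : ∀ r ∈ Ioi (0:ℝ), deriv (deriv (radLap d (hFun d a τ))) r
      = τ * (C1*(τ/2)*Gg (ν+1) τ r + C1*(τ*r/2)*(τ*r/2*Gg (ν+2) τ r)) := by
    intro r hr
    have hev : deriv (radLap d (hFun d a τ)) =ᶠ[nhds r] (fun x => τ * g1 x) :=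
      Filter.eventuallyEq_of_mem (isOpen_Ioi.mem_nhds hr) hderivL
    rw [hev.deriv_eq]
    exact ((hg1' r).const_mul τ).deriv
  -- key positive quantities
  have hPdef : (s/2)^(ν:ℝ) * a^(ν:ℝ) = (α/2)^(ν:ℝ) := by
    rw [hαdef, show a*s/2 = a*(s/2) by ring,
      Real.mul_rpow ha.le (by linarith : (0:ℝ) ≤ s/2)]
    ring
  have hBe' : B = (α/2)^(ν:ℝ) * (α/2) * Gg (ν+1) τ a := by
    rw [hBe, Real.rpow_add_one (ne_of_gt hα2pos)]
  refine ⟨?_, ?_, ?_, ?_, ?_⟩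
  · -- the ODE
    intro r hr
    have hr' : r ∈ Ioi (0:ℝ) := hr.1
    have hrne : r ≠ 0 := ne_of_gt (mem_Ioi.mp hr')
    rw [radLap, hderivL2 r hr', hderivL r hr', hradLap r hr', hg1def]
    beta_reduce
    rw [hrec' r, hd2, sub_eq_zero]
    field_simp
    ring
  · -- boundary value
    rw [hfg a (mem_Ioi.mpr ha), hgdef]
    beta_reduce
    rw [hC1def, hC0def, hI0e, ← hPdef]
    have hsB : s * B ≠ 0 := by positivity
    field_simp
    ring
  · -- boundary derivative
    rw [hderiv_hFun a (mem_Ioi.mpr ha), hg1def]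
    beta_reduce
    rw [hC1def, hBe', ← hPdef]
    have hP : (0:ℝ) < (s/2)^(ν:ℝ) * a^(ν:ℝ) := by
      have h1 := Real.rpow_pos_of_pos (by linarith : (0:ℝ) < s/2) ν
      have h2 := Real.rpow_pos_of_pos ha ν
      positivity
    have hE1 : 0 < Gg (ν+1) τ a := hEpos _ hν2 a
    have hden : s * ((s/2)^(ν:ℝ) * a^(ν:ℝ) * (α/2) * Gg (ν+1) τ a) ≠ 0 := by
      refine mul_ne_zero (ne_of_gt hs) (mul_ne_zero (mul_ne_zero (ne_of_gt hP) ?_) (ne_of_gt hE1))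
      exact ne_of_gt hα2pos
    rw [div_mul_eq_mul_div, div_mul_eq_mul_div, div_eq_one_iff_eq hden]
    rw [hαdef, ← hss]
    ring
  · -- the integral formula
    haveI : Nonempty (Fin d) := ⟨⟨0, by omega⟩⟩
    set V : ℝ := (volume (ball (0 : Euc d) 1)).toReal with hVdef
    set f : ℝ → ℝ := (Set.Iio a).indicator (hFun d a τ) with hfdef
    have h1 : (∫ x in ball (0:Euc d) a, hFun d a τ ‖x‖) = ∫ x : Euc d, f ‖x‖ := by
      rw [← integral_indicator measurableSet_ball]
      refine integral_congr_ae (Filter.Eventually.of_forall fun x => ?_)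
      rw [hfdef]
      beta_reduce
      by_cases hx : ‖x‖ < a
      · rw [Set.indicator_of_mem (mem_ball_zero_iff.mpr hx),
          Set.indicator_of_mem (Set.mem_Iio.mpr hx)]
      · rw [Set.indicator_of_notMem (fun h => hx (mem_ball_zero_iff.mp h))]
        exact (Set.indicator_of_notMem (by simpa using hx) (hFun d a τ)).symm
    have hpolar := integral_fun_norm_addHaar (volume : Measure (Euc d)) f
    have hdim : Module.finrank ℝ (Euc d) = d := finrank_euclideanSpace_fin
    rw [hdim] at hpolar
    rw [h1, hpolar, nsmul_eq_mul, smul_eq_mul]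
    simp_rw [smul_eq_mul]
    have h2 : ∫ y in Ioi (0:ℝ), y^(d-1) * f y = ∫ y in Ioo (0:ℝ) a, y^(d-1) * g y := by
      rw [hfdef]
      have hind : ∀ y : ℝ, y^(d-1) * (Set.Iio a).indicator (hFun d a τ) y
          = (Set.Iio a).indicator (fun y => y^(d-1) * hFun d a τ y) y := by
        intro y
        by_cases h : y ∈ Set.Iio a
        · rw [Set.indicator_of_mem h, Set.indicator_of_mem h]
        · rw [Set.indicator_of_notMem h, Set.indicator_of_notMem h, mul_zero]
      simp_rw [hind]
      rw [setIntegral_indicator measurableSet_Iio, Ioi_inter_Iio]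
      exact setIntegral_congr_fun measurableSet_Ioo
        (fun y hy => by rw [hfg y (mem_Ioi.mpr hy.1)])
    rw [h2]
    have hpowd : ∀ r : ℝ, r^d = r^(d-1) * r := by
      intro r
      conv_lhs => rw [show d = (d-1)+1 from (Nat.succ_pred_eq_of_pos (by omega)).symm]
      rw [pow_succ]
    set Φ : ℝ → ℝ := fun r => C1/2 * (r^d * Gg (ν+1) τ r) + C0/(d:ℝ) * r^d with hΦdef
    have hΦ' : ∀ r : ℝ, HasDerivAt Φ (r^(d-1) * g r) r := by
      intro r
      have hG2 : HasDerivAt (Gg (ν+1) τ) (τ*r/2*Gg (ν+2) τ r) r := by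
        rw [show ν+2 = ν+1+1 by ring]; exact Gg_hasDerivAt hν2 τ r
      have h4 : HasDerivAt (fun x : ℝ => x^d * Gg (ν+1) τ x)
          ((d:ℝ)*r^(d-1) * Gg (ν+1) τ r + r^d * (τ*r/2*Gg (ν+2) τ r)) r :=
        (hasDerivAt_pow d r).mul hG2
      have h5 := (h4.const_mul (C1/2)).add ((hasDerivAt_pow d r).const_mul (C0/(d:ℝ)))
      refine h5.congr_deriv ?_
      rw [hgdef]
      beta_reduce
      rw [hrec' r, hd2, hpowd r]
      have hν1ne : ν + 1 ≠ 0 := by linarith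
      field_simp
      ring
    have hcont : Continuous (fun y : ℝ => y^(d-1) * g y) := by
      refine (continuous_pow (d-1)).mul ?_
      rw [hgdef]
      exact (continuous_const.mul (Gg_continuous hν1 τ)).add continuous_const
    have h6 : ∫ y in Ioo (0:ℝ) a, y^(d-1) * g y = Φ a - Φ 0 := by
      rw [← integral_Ioc_eq_integral_Ioo, ← intervalIntegral.integral_of_le ha.le]
      exact intervalIntegral.integral_eq_sub_of_hasDerivAt (fun x _ => hΦ' x)
        (hcont.intervalIntegrable 0 a)
    rw [h6]
    have hΦ0 : Φ 0 = 0 := by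
      rw [hΦdef]
      beta_reduce
      rw [zero_pow (by omega : d ≠ 0)]
      ring
    rw [hΦ0, sub_zero, hΦdef]
    beta_reduce
    rw [hC1def, hC0def, hI0e, hBe', hPdef]
    have hQ : (0:ℝ) < (α/2)^(ν:ℝ) := hrp ν
    have hE1 : 0 < Gg (ν+1) τ a := hEpos _ hν2 a
    have hdne : (d:ℝ) ≠ 0 := ne_of_gt hd0
    have hsne : s ≠ 0 := ne_of_gt hs
    have hαne : α ≠ 0 := ne_of_gt hα
    have hQne : (α/2)^(ν:ℝ) ≠ 0 := ne_of_gt hQ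
    have hE1ne : Gg (ν+1) τ a ≠ 0 := ne_of_gt hE1
    field_simp
    rw [show volume.real (ball (0:Euc d) 1) = V from hVdef.symm]; ring
  · -- negativity
    have hV : 0 < (volume (ball (0 : Euc d) 1)).toReal := by
      haveI : Nonempty (Fin d) := ⟨⟨0, by omega⟩⟩
      exact ENNReal.toReal_pos (ne_of_gt (measure_ball_pos _ _ one_pos))
        measure_ball_lt_top.ne
    have key : 0 < α * ((α/2)^(ν:ℝ) * (τ*a^2/4 * Gg (ν+2) τ a)) :=
      mul_pos hα (mul_pos (hrp ν) (mul_pos (by positivity) (hEpos _ hν3 a)))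
    have hineq : (d:ℝ)/α < I0/B := by
      rw [div_lt_div_iff₀ hα hBpos, hI0e, hBe', hrec' a, hd2]
      nlinarith [key]
    apply mul_neg_of_pos_of_neg
    · exact mul_pos (pow_pos ha d) (div_pos hV hs)
    · linarith [hineq]
end
end
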